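/- arXiv:2009.08147 — 15 statements merged into one kernel-verified Lean document; each statement's English description precedes it below -/
import Mathlib

section
/- Let X be a proper metric space and i : X → X̄ a compactification of X. Then X̄ is a coarse compactification (i.e. for every entourage E ⊆ X × X, the closure of (i × i)(E) in X̄ × X̄ meets (∂X × X̄) ∪ (X̄ × ∂X) only inside the diagonal {(p,p) : p ∈ ∂X}) if and only if for every two subsets A, B ⊆ X with A ≍ B, the closures of i(A) and i(B) in X̄ have nonempty intersection. -/
open Topology

/-- A subset `E ⊆ X × X` is an entourage if `sup_{(x,y) ∈ E} d(x,y) < ∞`. -/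
def IsEntourage {X : Type*} [MetricSpace X] (E : Set (X × X)) : Prop :=
  ∃ C : ℝ, ∀ p ∈ E, dist p.1 p.2 ≤ C

/-- `E[S] = {x | ∃ y ∈ S, (x,y) ∈ E}`. -/
def EImage {X : Type*} (E : Set (X × X)) (S : Set X) : Set X :=
  {x | ∃ y ∈ S, (x, y) ∈ E}

/-- Subsets `A, B` are close (`A ≍ B`): there are `R ≥ 0` and a sequence
`(aₙ, bₙ) ∈ A × B` with `d(aₙ, bₙ) ≤ R` and `{aₙ}` unbounded. -/
def Close {X : Type*} [MetricSpace X] (A B : Set X) : Prop :=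
  ∃ R : ℝ, 0 ≤ R ∧ ∃ a b : ℕ → X, (∀ n, a n ∈ A) ∧ (∀ n, b n ∈ B) ∧
    (∀ n, dist (a n) (b n) ≤ R) ∧ ¬ Bornology.IsBounded (Set.range a)

/-- `A ≍_f B` iff there do not exist `A' ⊇ A`, `B' ⊇ B` with `A' ∪ B' = X` and `¬(A' ≍ B')`. -/
def CloseF {X : Type*} [MetricSpace X] (A B : Set X) : Prop :=
  ¬ ∃ A' B' : Set X, A ⊆ A' ∧ B ⊆ B' ∧ A' ∪ B' = Set.univ ∧ ¬ Close A' B'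

/-- A large-scale proximity relation. -/
structure IsLSP {X : Type*} [MetricSpace X] (r : Set X → Set X → Prop) : Prop where
  not_self_iff_bounded : ∀ B : Set X, (¬ r B B) ↔ Bornology.IsBounded B
  symm : ∀ A B : Set X, r A B → r B A
  entourage_invariant : ∀ (A A' : Set X) (E : Set (X × X)), IsEntourage E →
    A' ⊆ EImage E A → A ⊆ EImage E A' → ∀ B : Set X, r A B → r A' B
  union_iff : ∀ A B C : Set X, r (A ∪ B) C ↔ (r A C ∨ r B C)
  separation : ∀ A B : Set X, ¬ r A B →
    ∃ C D : Set X, C ∪ D = Set.univ ∧ ¬ r C A ∧ ¬ r D B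

/-- An `r`-ultrafilter on `X`. -/
def IsRUltrafilter {X : Type*} (r : Set X → Set X → Prop) (F : Set (Set X)) : Prop :=
  (∀ A ∈ F, ∀ B ∈ F, r A B) ∧ (∀ A B : Set X, A ∪ B ∈ F → A ∈ F ∨ B ∈ F) ∧ Set.univ ∈ F

/-- A compactification `i : X → X̄` is coarse if for every entourage `E`, the closure of
`(i × i)(E)` meets `(∂X × X̄) ∪ (X̄ × ∂X)` only inside the diagonal over `∂X = X̄ ∖ i(X)`. -/
def IsCoarseCompactification {X Xb : Type*} [MetricSpace X] [TopologicalSpace Xb]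
    (i : X → Xb) : Prop :=
  ∀ E : Set (X × X), IsEntourage E →
    closure ((fun p : X × X => (i p.1, i p.2)) '' E) ∩
      (((Set.range i)ᶜ ×ˢ (Set.univ : Set Xb)) ∪ ((Set.univ : Set Xb) ×ˢ (Set.range i)ᶜ)) ⊆
      {q : Xb × Xb | q.1 = q.2 ∧ q.1 ∈ (Set.range i)ᶜ}

/-- A Higson function: bounded, continuous, and for every entourage `E` and `ε > 0`
there is a bounded set `B` outside of which the variation on `E` is `< ε`. -/
def IsHigson {X : Type*} [MetricSpace X] (φ : X → ℝ) : Prop :=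
  Continuous φ ∧ (∃ C : ℝ, ∀ x, |φ x| ≤ C) ∧
  ∀ E : Set (X × X), IsEntourage E → ∀ ε > (0:ℝ), ∃ B : Set X, Bornology.IsBounded B ∧
    ∀ p ∈ E, (p.1 ∉ B ∨ p.2 ∉ B) → |φ p.1 - φ p.2| < ε

/-- A coarse map: coarsely uniform and coarsely proper. -/
def IsCoarseMap {X Y : Type*} [MetricSpace X] [MetricSpace Y] (f : X → Y) : Prop :=
  (∀ E : Set (X × X), IsEntourage E →
    IsEntourage ((fun p : X × X => (f p.1, f p.2)) '' E)) ∧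
  (∀ S : Set Y, Bornology.IsBounded S → Bornology.IsBounded (f ⁻¹' S))

/-- The Gromov product `(x|y)_w`. -/
noncomputable def gromovProd {X : Type*} [MetricSpace X] (w x y : X) : ℝ :=
  (dist x w + dist y w - dist x y) / 2

/-- `X` is a geodesic metric space. -/
def IsGeodesicSpace (X : Type*) [MetricSpace X] : Prop :=
  ∀ x y : X, ∃ γ : ℝ → X, γ 0 = x ∧ γ (dist x y) = y ∧
    ∀ s ∈ Set.Icc (0:ℝ) (dist x y), ∀ t ∈ Set.Icc (0:ℝ) (dist x y),
      dist (γ s) (γ t) = |s - t|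

/-- A compactification of a proper metric space is coarse iff for all
`A ≍ B` the closures of `i(A)` and `i(B)` meet. -/
theorem coarse_iff_close_closures_meet {X Xb : Type*} [MetricSpace X] [ProperSpace X]
    [TopologicalSpace Xb] [CompactSpace Xb] [T2Space Xb]
    (i : X → Xb) (hi : IsOpenEmbedding i) (hd : DenseRange i) :
    IsCoarseCompactification i ↔
      ∀ A B : Set X, Close A B → (closure (i '' A) ∩ closure (i '' B)).Nonempty := by
  unfold IsCoarseCompactification IsEntourage Close

  constructor
  · -- forward
    intro hcoarse A B hAB
    obtain ⟨R, hR, a, b, ha, hb, hdist, hunb⟩ := hAB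
    have hesc : ∀ n : ℕ, ∃ m, (n : ℝ) < dist (a m) (a 0) := by
      intro n
      by_contra hc
      push_neg at hc
      exact hunb ((Metric.isBounded_iff_subset_closedBall (a 0)).mpr
        ⟨n, by rintro _ ⟨m, rfl⟩; exact hc m⟩)
    choose φ hφ using hesc
    set a' : ℕ → X := fun n => a (φ n) with ha'
    set b' : ℕ → X := fun n => b (φ n) with hb'
    set f : ℕ → Xb × Xb := fun n => (i (a' n), i (b' n)) with hf
    obtain ⟨z, hz⟩ := exists_clusterPt_of_compactSpace (Filter.map f Filter.atTop)
    have hzcl : ∀ s : Set (Xb × Xb), (∀ n, f n ∈ s) → z ∈ closure s := by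
      intro s hs
      exact mem_closure_iff_clusterPt.mpr (hz.mono (Filter.le_principal_iff.mpr
        (Filter.mem_map.mpr (Filter.univ_mem' hs))))
    have hz1 : z.1 ∉ Set.range i := by
      rintro ⟨x, hx⟩
      -- frequently f n ∈ i '' ball x 1 ×ˢ univ
      have hopen : IsOpen ((i '' Metric.ball x 1) ×ˢ (Set.univ : Set Xb)) :=
        (hi.isOpenMap _ Metric.isOpen_ball).prod isOpen_univ
      have hmemz : z ∈ (i '' Metric.ball x 1) ×ˢ (Set.univ : Set Xb) :=
        ⟨hx ▸ ⟨x, Metric.mem_ball_self one_pos, rfl⟩, trivial⟩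
      obtain ⟨N, hN⟩ : ∃ N : ℕ, 1 + dist x (a 0) ≤ (N : ℝ) := exists_nat_ge _
      have hnhds : (i '' Metric.ball x 1) ×ˢ (Set.univ : Set Xb) ∈ 𝓝 z :=
        hopen.mem_nhds hmemz
      have hVmem : f '' Set.Ici N ∈ Filter.map f Filter.atTop :=
        Filter.image_mem_map (Filter.mem_atTop N)
      obtain ⟨w, hw1, hw2⟩ := clusterPt_iff_nonempty.mp hz hnhds hVmem
      obtain ⟨n, hn, rfl⟩ := hw2
      obtain ⟨y, hy, hyx⟩ := hw1.1
      have hax : a' n ∈ Metric.ball x 1 := (hi.injective hyx) ▸ hy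
      have h1 : (n : ℝ) < dist (a' n) (a 0) := hφ n
      have h2 : dist (a' n) (a 0) ≤ dist (a' n) x + dist x (a 0) := dist_triangle _ _ _
      have h3 : dist (a' n) x < 1 := Metric.mem_ball.mp hax
      have h4 : (N : ℝ) ≤ (n : ℝ) := Nat.cast_le.mpr hn
      linarith
    -- the entourage of pairs
    set E' : Set (X × X) := Set.range (fun n => (a' n, b' n)) with hE'
    have hEnt : ∃ C : ℝ, ∀ p ∈ E', dist p.1 p.2 ≤ C := by
      refine ⟨R, ?_⟩
      rintro p ⟨n, rfl⟩
      exact hdist (φ n)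
    have hzE : z ∈ closure ((fun p : X × X => (i p.1, i p.2)) '' E') :=
      hzcl _ (fun n => ⟨(a' n, b' n), ⟨n, rfl⟩, rfl⟩)
    have hzAB : z ∈ closure ((i '' A) ×ˢ (i '' B)) :=
      hzcl _ (fun n => ⟨⟨a' n, ha _, rfl⟩, ⟨b' n, hb _, rfl⟩⟩)
    rw [closure_prod_eq] at hzAB
    have hdiag := hcoarse E' hEnt ⟨hzE, Or.inl ⟨hz1, trivial⟩⟩
    exact ⟨z.1, hzAB.1, hdiag.1 ▸ hzAB.2⟩
  · -- backward
    intro hclose E hE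
    obtain ⟨C, hC⟩ := hE
    rintro ⟨p, q⟩ ⟨hpq, hbd⟩
    have hXne : Nonempty X := by
      by_contra h
      rw [not_nonempty_iff] at h
      have : closure ((fun p : X × X => (i p.1, i p.2)) '' E) = ∅ := by
        simp [Set.eq_empty_of_isEmpty E]
      simp [this] at hpq
    obtain ⟨x₀⟩ := hXne
    have key : p = q := by
      by_contra hne
      -- disjoint closed neighborhoods
      obtain ⟨U₀, V₀, hU₀, hV₀, hpU₀, hqV₀, hUV₀⟩ := t2_separation hne
      obtain ⟨tU, htUm, htUc, htUs⟩ := exists_mem_nhds_isClosed_subset (hU₀.mem_nhds hpU₀)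
      obtain ⟨tV, htVm, htVc, htVs⟩ := exists_mem_nhds_isClosed_subset (hV₀.mem_nhds hqV₀)
      set U := interior tU with hU
      set V := interior tV with hV
      have hpU : p ∈ U := mem_interior_iff_mem_nhds.mpr htUm
      have hqV : q ∈ V := mem_interior_iff_mem_nhds.mpr htVm
      have hclU : closure U ⊆ U₀ := (closure_minimal interior_subset htUc).trans htUs
      have hclV : closure V ⊆ V₀ := (closure_minimal interior_subset htVc).trans htVs
      have hdisj : Disjoint (closure U) (closure V) :=
        hUV₀.mono hclU hclV
      -- the two cases
      rcases hbd with hbd | hbd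
      · -- p ∉ range i
        have hp : p ∉ Set.range i := hbd.1
        have hsel : ∀ n : ℕ, ∃ xy : X × X, xy ∈ E ∧ i xy.1 ∈ U ∧ i xy.2 ∈ V ∧
            (n : ℝ) < dist xy.1 x₀ := by
          intro n
          have hK : IsCompact (Metric.closedBall x₀ (n : ℝ)) := isCompact_closedBall _ _
          have hKc : IsClosed (i '' Metric.closedBall x₀ (n : ℝ)) :=
            (hK.image hi.continuous).isClosed
          have hOopen : IsOpen ((U \ i '' Metric.closedBall x₀ (n : ℝ)) ×ˢ V) :=
            ((isOpen_interior).sdiff hKc).prod isOpen_interior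
          have hOmem : (p, q) ∈ (U \ i '' Metric.closedBall x₀ (n : ℝ)) ×ˢ V :=
            ⟨⟨hpU, fun ⟨y, _, hy⟩ => hp ⟨y, hy⟩⟩, hqV⟩
          obtain ⟨w, hw1, hw2⟩ := mem_closure_iff.mp hpq _ hOopen hOmem
          obtain ⟨xy, hxyE, rfl⟩ := hw2
          refine ⟨xy, hxyE, hw1.1.1, hw1.2, ?_⟩
          by_contra hle
          push_neg at hle
          exact hw1.1.2 ⟨xy.1, Metric.mem_closedBall.mpr hle, rfl⟩
        choose xy hxyE hxyU hxyV hxyd using hsel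
        set aa : ℕ → X := fun n => (xy n).1 with haa
        set bb : ℕ → X := fun n => (xy n).2 with hbb
        have hcl : ∃ R : ℝ, 0 ≤ R ∧ ∃ a b : ℕ → X, (∀ n, a n ∈ Set.range aa) ∧
            (∀ n, b n ∈ Set.range bb) ∧ (∀ n, dist (a n) (b n) ≤ R) ∧
            ¬ Bornology.IsBounded (Set.range a) := by
          refine ⟨max C 0, le_max_right _ _, aa, bb, fun n => ⟨n, rfl⟩, fun n => ⟨n, rfl⟩,
            fun n => le_max_of_le_left (hC _ (hxyE n)), ?_⟩
          intro hbdd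
          obtain ⟨r, hr⟩ := (Metric.isBounded_iff_subset_closedBall x₀).mp hbdd
          obtain ⟨N, hN⟩ : ∃ N : ℕ, r ≤ (N : ℝ) := exists_nat_ge r
          have := hxyd N
          have := hr ⟨N, rfl⟩
          rw [Metric.mem_closedBall] at this
          linarith
        obtain ⟨w, hwA, hwB⟩ := hclose _ _ hcl
        have hwU : w ∈ closure U :=
          closure_mono (by rintro _ ⟨_, ⟨n, rfl⟩, rfl⟩; exact hxyU n) hwA
        have hwV : w ∈ closure V :=
          closure_mono (by rintro _ ⟨_, ⟨n, rfl⟩, rfl⟩; exact hxyV n) hwB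
        exact hdisj.ne_of_mem hwU hwV rfl
      · -- q ∉ range i
        have hq : q ∉ Set.range i := hbd.2
        have hsel : ∀ n : ℕ, ∃ xy : X × X, xy ∈ E ∧ i xy.1 ∈ U ∧ i xy.2 ∈ V ∧
            (n : ℝ) < dist xy.2 x₀ := by
          intro n
          have hK : IsCompact (Metric.closedBall x₀ (n : ℝ)) := isCompact_closedBall _ _
          have hKc : IsClosed (i '' Metric.closedBall x₀ (n : ℝ)) :=
            (hK.image hi.continuous).isClosed
          have hOopen : IsOpen (U ×ˢ (V \ i '' Metric.closedBall x₀ (n : ℝ))) :=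
            isOpen_interior.prod ((isOpen_interior).sdiff hKc)
          have hOmem : (p, q) ∈ U ×ˢ (V \ i '' Metric.closedBall x₀ (n : ℝ)) :=
            ⟨hpU, ⟨hqV, fun ⟨y, _, hy⟩ => hq ⟨y, hy⟩⟩⟩
          obtain ⟨w, hw1, hw2⟩ := mem_closure_iff.mp hpq _ hOopen hOmem
          obtain ⟨xy, hxyE, rfl⟩ := hw2
          refine ⟨xy, hxyE, hw1.1, hw1.2.1, ?_⟩
          by_contra hle
          push_neg at hle
          exact hw1.2.2 ⟨xy.2, Metric.mem_closedBall.mpr hle, rfl⟩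
        choose xy hxyE hxyU hxyV hxyd using hsel
        set aa : ℕ → X := fun n => (xy n).1 with haa
        set bb : ℕ → X := fun n => (xy n).2 with hbb
        have hcl : ∃ R : ℝ, 0 ≤ R ∧ ∃ a b : ℕ → X, (∀ n, a n ∈ Set.range bb) ∧
            (∀ n, b n ∈ Set.range aa) ∧ (∀ n, dist (a n) (b n) ≤ R) ∧
            ¬ Bornology.IsBounded (Set.range a) := by
          refine ⟨max C 0, le_max_right _ _, bb, aa, fun n => ⟨n, rfl⟩, fun n => ⟨n, rfl⟩,
            fun n => by rw [dist_comm]; exact le_max_of_le_left (hC _ (hxyE n)), ?_⟩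
          intro hbdd
          obtain ⟨r, hr⟩ := (Metric.isBounded_iff_subset_closedBall x₀).mp hbdd
          obtain ⟨N, hN⟩ : ∃ N : ℕ, r ≤ (N : ℝ) := exists_nat_ge r
          have := hxyd N
          have := hr ⟨N, rfl⟩
          rw [Metric.mem_closedBall] at this
          linarith
        obtain ⟨w, hwB, hwA⟩ := hclose _ _ hcl
        have hwV : w ∈ closure V :=
          closure_mono (by rintro _ ⟨_, ⟨n, rfl⟩, rfl⟩; exact hxyV n) hwB
        have hwU : w ∈ closure U :=
          closure_mono (by rintro _ ⟨_, ⟨n, rfl⟩, rfl⟩; exact hxyU n) hwA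
        exact hdisj.ne_of_mem hwU hwV rfl
    refine ⟨key, ?_⟩
    rcases hbd with hbd | hbd
    · exact hbd.1
    · exact key ▸ hbd.2
end

section
/- Let X be a metric space and r a large-scale proximity relation on X. Then r is finer than the close relation: for all subsets A, B ⊆ X, if A ≍ B then A r B. -/
open Topology

/-- every large-scale proximity relation is finer than the close relation. -/
theorem lsp_finer_than_close {X : Type*} [MetricSpace X]
    (r : Set X → Set X → Prop) (hr : IsLSP r) :
    ∀ A B : Set X, Close A B → r A B := by
  -- monotonicity lemma
  have mono : ∀ A A' B : Set X, A ⊆ A' → r A B → r A' B := by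
    intro A A' B hAA' h
    have : A ∪ A' = A' := Set.union_eq_self_of_subset_left hAA'
    have := (hr.union_iff A A' B).mpr (Or.inl h)
    rwa [Set.union_eq_self_of_subset_left hAA'] at this
  rintro A B ⟨R, hR, a, b, ha, hb, hd, hub⟩
  set A₀ := Set.range a
  set B₀ := Set.range b
  set E : Set (X × X) := {p | dist p.1 p.2 ≤ R} with hE
  have hEnt : IsEntourage E := ⟨R, fun p hp => hp⟩
  have hB₀ : B₀ ⊆ EImage E A₀ := by
    rintro x ⟨n, rfl⟩
    exact ⟨a n, ⟨n, rfl⟩, by simpa [E, dist_comm] using hd n⟩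
  have hA₀ : A₀ ⊆ EImage E B₀ := by
    rintro x ⟨n, rfl⟩
    exact ⟨b n, ⟨n, rfl⟩, hd n⟩
  have hAA : r A₀ A₀ := by
    by_contra h
    exact hub ((hr.not_self_iff_bounded A₀).mp h)
  have hBA : r B₀ A₀ := hr.entourage_invariant A₀ B₀ E hEnt hB₀ hA₀ A₀ hAA
  have hAB : r A₀ B₀ := hr.symm _ _ hBA
  have h1 : r A B₀ := mono A₀ A B₀ (by rintro x ⟨n, rfl⟩; exact ha n) hAB
  have h2 : r B A := mono B₀ B A (by rintro x ⟨n, rfl⟩; exact hb n) (hr.symm _ _ h1)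
  exact hr.symm _ _ h2
end

section
/- Let X be a metric space and r a large-scale proximity relation on X. Define, for ultrafilters F, G on X, F λ_r G if A r B holds for all A ∈ F and B ∈ G. Then λ_r is transitive on nonprincipal ultrafilters: if F₁, F₂, F₃ are nonprincipal ultrafilters on X with F₁ λ_r F₂ and F₂ λ_r F₃, then F₁ λ_r F₃. -/
open Topology

/-- the relation `λ_r` is transitive on nonprincipal ultrafilters. -/
theorem lambda_r_transitive {X : Type*} [MetricSpace X]
    (r : Set X → Set X → Prop) (hr : IsLSP r)
    (F₁ F₂ F₃ : Ultrafilter X)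
    (h₁ : ∀ x : X, F₁ ≠ pure x) (h₂ : ∀ x : X, F₂ ≠ pure x) (h₃ : ∀ x : X, F₃ ≠ pure x)
    (h12 : ∀ A ∈ F₁, ∀ B ∈ F₂, r A B) (h23 : ∀ A ∈ F₂, ∀ B ∈ F₃, r A B) :
    ∀ A ∈ F₁, ∀ B ∈ F₃, r A B := by
  intro A hA B hB
  by_contra hAB
  obtain ⟨C, D, hCD, hCA, hDB⟩ := hr.separation A B hAB
  have hmem : C ∪ D ∈ F₂ := by rw [hCD]; exact Filter.univ_mem
  rcases (Ultrafilter.union_mem_iff).mp hmem with hC | hD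
  · exact hCA (hr.symm A C (h12 A hA C hC))
  · exact hDB (h23 D hD B hB)
end

section
/- Let X be a metric space and r a large-scale proximity relation on X. Let F and G be r-ultrafilters on X such that there exist A ∈ F and B ∈ G with ¬(A r B). Then there exist subsets C, D ⊆ X with C ∪ D = X, C ∉ F, D ∉ G, and such that every r-ultrafilter on X contains C or contains D. -/
open Topology

/-- separation of `r`-ultrafilters. -/
theorem rUltrafilter_separation {X : Type*} [MetricSpace X]
    (r : Set X → Set X → Prop) (hr : IsLSP r)
    (F G : Set (Set X)) (hF : IsRUltrafilter r F) (hG : IsRUltrafilter r G)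
    (A B : Set X) (hA : A ∈ F) (hB : B ∈ G) (hAB : ¬ r A B) :
    ∃ C D : Set X, C ∪ D = Set.univ ∧ C ∉ F ∧ D ∉ G ∧
      ∀ H : Set (Set X), IsRUltrafilter r H → C ∈ H ∨ D ∈ H := by
  obtain ⟨C, D, hCD, hCA, hDB⟩ := hr.separation A B hAB
  exact ⟨C, D, hCD, fun hC => hCA (hF.1 C hC A hA),
    fun hD => hDB (hG.1 D hD B hB),
    fun H hH => hH.2.1 C D (hCD ▸ hH.2.2)⟩
end

section
/- Let X be a proper metric space and r a large-scale proximity relation on X. Let δ_r X be the set of r-ultrafilters on X, equipped with the topology generated by the sets {F ∈ δ_r X : A ∉ F} for A ⊆ X, and let λ_r be the relation on δ_r X defined by F λ_r G iff A r B for all A ∈ F and B ∈ G. Then the quotient space ∂'_r X = δ_r X / λ_r (with the quotient topology) is a compact Hausdorff topological space. -/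
open Topology

set_option linter.unusedSectionVars false
section Aux
variable {X : Type*} [MetricSpace X] {r : Set X → Set X → Prop}

lemma lsp_mono (hr : IsLSP r) {A A' B : Set X} (h : A ⊆ A') (hAB : r A B) : r A' B := by
  have h2 := (hr.union_iff A A' B).mpr (Or.inl hAB)
  rwa [Set.union_eq_self_of_subset_left h] at h2

lemma lsp_mono_right (hr : IsLSP r) {A B B' : Set X} (h : B ⊆ B') (hAB : r A B) : r A B' :=
  hr.symm _ _ (lsp_mono hr h (hr.symm _ _ hAB))

lemma lsp_bounded_not (hr : IsLSP r) {B : Set X} (hB : Bornology.IsBounded B) :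
    ∀ C, ¬ r B C := by
  have hnr : ¬ r B B := (hr.not_self_iff_bounded B).mpr hB
  obtain ⟨C', D', hcover, hC', hD'⟩ := hr.separation B B hnr
  intro C hC
  have hCB : r C B := hr.symm _ _ hC
  have h3 : r (C ∩ C' ∪ C ∩ D') B := by
    rw [← Set.inter_union_distrib_left, hcover, Set.inter_univ]; exact hCB
  rcases (hr.union_iff _ _ _).mp h3 with h | h
  · exact hC' (lsp_mono hr Set.inter_subset_right h)
  · exact hD' (lsp_mono hr Set.inter_subset_right h)

lemma lsp_inter_bounded (hr : IsLSP r) {T S : Set X} (h : ¬ r T S) :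
    Bornology.IsBounded (T ∩ S) := by
  by_contra hb
  have := (hr.not_self_iff_bounded (T ∩ S)).not_right.mpr hb
  exact h (lsp_mono_right hr Set.inter_subset_right (lsp_mono hr Set.inter_subset_left this))

/-- Key separation: `¬ r A B` yields `M, N` with `¬ r M A`, `¬ r N B`, `¬ r Mᶜ Nᶜ`. -/
lemma lsp_sep (hr : IsLSP r) {A B : Set X} (h : ¬ r A B) :
    ∃ M N : Set X, ¬ r M A ∧ ¬ r N B ∧ ¬ r Mᶜ Nᶜ := by
  obtain ⟨C, D, hCD, hCA, hDB⟩ := hr.separation A B h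
  have hCc : Cᶜ ⊆ D := Set.compl_subset_iff_union.mpr hCD
  have hScB : ¬ r Cᶜ B := fun hh => hDB (lsp_mono hr hCc hh)
  have hAS : ¬ r A C := fun hh => hCA (hr.symm _ _ hh)
  obtain ⟨M, D₁, hCD₁, hMA, hD₁S⟩ := hr.separation A C hAS
  have hBSc : ¬ r B Cᶜ := fun hh => hScB (hr.symm _ _ hh)
  obtain ⟨N, D₂, hCD₂, hNB, hD₂Sc⟩ := hr.separation B Cᶜ hBSc
  have h1 : ¬ r Mᶜ C := fun hh => hD₁S (lsp_mono hr (Set.compl_subset_iff_union.mpr hCD₁) hh)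
  have h2 : ¬ r Nᶜ Cᶜ := fun hh => hD₂Sc (lsp_mono hr (Set.compl_subset_iff_union.mpr hCD₂) hh)
  refine ⟨M, N, hMA, hNB, fun hh => ?_⟩
  have h3 : r (Nᶜ ∩ C ∪ Nᶜ ∩ Cᶜ) Mᶜ := by
    rw [← Set.inter_union_distrib_left, Set.union_compl_self, Set.inter_univ]
    exact hr.symm _ _ hh
  rcases (hr.union_iff _ _ _).mp h3 with h' | h'
  · exact h1 (lsp_mono_right hr Set.inter_subset_right (hr.symm _ _ h'))
  · exact lsp_bounded_not hr (lsp_inter_bounded hr h2) Mᶜ h'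

lemma rUlt_compl_mem {F : Set (Set X)} (hF : IsRUltrafilter r F) {M : Set X}
    (h : M ∉ F) : Mᶜ ∈ F := by
  rcases hF.2.1 M Mᶜ (by rw [Set.union_compl_self]; exact hF.2.2) with h' | h'
  · exact absurd h' h
  · exact h'

end Aux

lemma rUlt_compact {X : Type*} [MetricSpace X] (r : Set X → Set X → Prop) :
    @CompactSpace {F : Set (Set X) // IsRUltrafilter r F}
      (TopologicalSpace.generateFrom
        {U : Set {F : Set (Set X) // IsRUltrafilter r F} |
          ∃ A : Set X, U = {F : {F : Set (Set X) // IsRUltrafilter r F} | A ∉ F.1}}) := by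
  classical
  set δr := {F : Set (Set X) // IsRUltrafilter r F} with hδr
  set t := TopologicalSpace.generateFrom
    {U : Set δr | ∃ A : Set X, U = {F : δr | A ∉ F.1}} with ht
  let c : δr → (Set X → Bool) := fun F A => decide (A ∈ F.1)
  have hrange : Set.range c =
      ((⋂ (A : Set X), ⋂ (B : Set X),
          {g : Set X → Bool | g A = true → g B = true → r A B}) ∩
       (⋂ (A : Set X), ⋂ (B : Set X),
          {g : Set X → Bool | g (A ∪ B) = true → g A = true ∨ g B = true}) ∩
       {g : Set X → Bool | g Set.univ = true}) := by
    ext g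
    simp only [Set.mem_range, Set.mem_inter_iff, Set.mem_iInter, Set.mem_setOf_eq]
    constructor
    · rintro ⟨F, rfl⟩
      simp only [c, decide_eq_true_eq]
      exact ⟨⟨fun A B hA hB => F.2.1 A hA B hB, fun A B h => F.2.2.1 A B h⟩, F.2.2.2⟩
    · rintro ⟨⟨h1, h2⟩, h3⟩
      refine ⟨⟨{A | g A = true}, ⟨fun A hA B hB => h1 A B hA hB,
        fun A B h => h2 A B h, h3⟩⟩, ?_⟩
      funext A
      simp [c]
  have hbfalse : ∀ A : Set X, IsClosed {g : Set X → Bool | g A = false} := fun A => by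
    have h : {g : Set X → Bool | g A = false} = (fun g : Set X → Bool => g A) ⁻¹' {false} := by
      ext g; simp
    rw [h]; exact (isClosed_singleton (x := false)).preimage (continuous_apply A)
  have hbtrue : ∀ A : Set X, IsClosed {g : Set X → Bool | g A = true} := fun A => by
    have h : {g : Set X → Bool | g A = true} = (fun g : Set X → Bool => g A) ⁻¹' {true} := by
      ext g; simp
    rw [h]; exact (isClosed_singleton (x := true)).preimage (continuous_apply A)
  have hclosed : IsClosed (Set.range c) := by
    rw [hrange]
    refine IsClosed.inter (IsClosed.inter ?_ ?_) (hbtrue _)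
    · refine isClosed_iInter fun A => isClosed_iInter fun B => ?_
      by_cases hAB : r A B
      · have : {g : Set X → Bool | g A = true → g B = true → r A B} = Set.univ := by
          ext g; simp [hAB]
        rw [this]; exact isClosed_univ
      · have : {g : Set X → Bool | g A = true → g B = true → r A B} =
            {g : Set X → Bool | g A = false} ∪ {g : Set X → Bool | g B = false} := by
          ext g
          simp only [Set.mem_setOf_eq, Set.mem_union]
          constructor
          · intro h
            rcases Bool.eq_false_or_eq_true (g A) with h' | h'
            · rcases Bool.eq_false_or_eq_true (g B) with h'' | h''
              · exact absurd (h h' h'') hAB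
              · exact Or.inr h''
            · exact Or.inl h'
          · rintro (h' | h') hA hB
            · rw [hA] at h'; exact absurd h' (by simp)
            · rw [hB] at h'; exact absurd h' (by simp)
        rw [this]; exact (hbfalse A).union (hbfalse B)
    · refine isClosed_iInter fun A => isClosed_iInter fun B => ?_
      have : {g : Set X → Bool | g (A ∪ B) = true → g A = true ∨ g B = true} =
          {g : Set X → Bool | g (A ∪ B) = false} ∪
            ({g : Set X → Bool | g A = true} ∪ {g : Set X → Bool | g B = true}) := by
        ext g
        simp only [Set.mem_setOf_eq, Set.mem_union]
        constructor
        · intro h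
          rcases Bool.eq_false_or_eq_true (g (A ∪ B)) with h' | h'
          · exact Or.inr (h h')
          · exact Or.inl h'
        · rintro (h' | h') hu
          · rw [hu] at h'; exact absurd h' (by simp)
          · exact h'
      rw [this]
      exact (hbfalse _).union ((hbtrue A).union (hbtrue B))
  have hKc : IsCompact (Set.range c) := hclosed.isCompact
  let tc : TopologicalSpace δr := TopologicalSpace.induced c inferInstance
  have hi : @Topology.IsInducing δr (Set X → Bool) tc _ c := @Topology.IsInducing.mk δr _ tc _ c rfl
  have h1 : @IsCompact δr tc Set.univ := by
    rw [@Topology.IsInducing.isCompact_iff δr _ tc _ _ c hi, Set.image_univ]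
    exact hKc
  have hle : tc ≤ t := by
    rw [ht]
    refine @le_generateFrom δr tc _ ?_
    rintro U ⟨A, rfl⟩
    refine (@isOpen_induced_iff δr (Set X → Bool) _ {F : δr | A ∉ F.1} c).mpr
      ⟨{g : Set X → Bool | g A = false}, ?_, ?_⟩
    · have h : {g : Set X → Bool | g A = false} = (fun g : Set X → Bool => g A) ⁻¹' {false} := by
        ext g; simp
      rw [h]; exact (isOpen_discrete _).preimage (continuous_apply A)
    · ext F; simp [c]
  have h2 : @IsCompact δr t Set.univ := by
    have himg := @IsCompact.image δr δr tc t Set.univ id h1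
      (@continuous_id_of_le δr tc t hle)
    rwa [Set.image_id] at himg
  exact @CompactSpace.mk δr t h2

/-- the quotient `∂'_r X = δ_r X / λ_r` is a compact Hausdorff space. -/
theorem rBoundary_compact_hausdorff {X : Type*} [MetricSpace X] [ProperSpace X]
    (r : Set X → Set X → Prop) (hr : IsLSP r) :
    let δr := {F : Set (Set X) // IsRUltrafilter r F}
    let t : TopologicalSpace δr :=
      TopologicalSpace.generateFrom {U : Set δr | ∃ A : Set X, U = {F : δr | A ∉ F.1}}
    let lam : δr → δr → Prop := fun F G => ∀ A ∈ F.1, ∀ B ∈ G.1, r A B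
    let tq : TopologicalSpace (Quot lam) := TopologicalSpace.coinduced (Quot.mk lam) t
    @CompactSpace (Quot lam) tq ∧ @T2Space (Quot lam) tq := by
  classical
  intro δr t lam tq
  letI : TopologicalSpace δr := t
  haveI hCS : CompactSpace δr := rUlt_compact r
  letI : TopologicalSpace (Quot lam) := tq
  -- lam is an equivalence relation
  have hlamrefl : ∀ F : δr, lam F F := fun F A hA B hB => F.2.1 A hA B hB
  have hlamsymm : ∀ {F G : δr}, lam F G → lam G F :=
    fun h A hA B hB => hr.symm _ _ (h B hB A hA)
  have hlamtrans : ∀ {F G H : δr}, lam F G → lam G H → lam F H := by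
    intro F G H h1 h2 A hA C hC
    by_contra hAC
    obtain ⟨C', D', hcover, hC', hD'⟩ := hr.separation A C hAC
    have hmem : C' ∪ D' ∈ G.1 := by rw [hcover]; exact G.2.2.2
    rcases G.2.2.1 _ _ hmem with h' | h'
    · exact hC' (hr.symm _ _ (h1 A hA C' h'))
    · exact hD' (h2 D' h' C hC)
  have hEquiv : Equivalence lam := ⟨hlamrefl, fun h => hlamsymm h, fun h h' => hlamtrans h h'⟩
  have hmkeq : ∀ {F G : δr}, Quot.mk lam F = Quot.mk lam G ↔ lam F G := by
    intro F G
    rw [Quot.eq]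
    exact hEquiv.eqvGen_iff
  -- generators are open
  have hgenopen : ∀ A : Set X, IsOpen {F : δr | A ∉ F.1} := fun A =>
    TopologicalSpace.isOpen_generateFrom_of_mem ⟨A, rfl⟩
  have hmemclosed : ∀ A : Set X, IsClosed {F : δr | A ∈ F.1} := by
    intro A
    have h : {F : δr | A ∈ F.1} = {F : δr | A ∉ F.1}ᶜ := by ext F; simp
    rw [h]; exact (hgenopen A).isClosed_compl
  -- the relation lam is closed in δr × δr
  have hlamClosed : IsClosed {p : δr × δr | lam p.1 p.2} := by
    rw [← isOpen_compl_iff, isOpen_prod_iff]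
    intro K H hKH
    simp only [Set.mem_compl_iff, Set.mem_setOf_eq] at hKH
    have hex : ∃ A ∈ K.1, ∃ B ∈ H.1, ¬ r A B := by
      by_contra hno
      push_neg at hno
      exact hKH fun A hA B hB => hno A hA B hB
    obtain ⟨A, hA, B, hB, hAB⟩ := hex
    obtain ⟨M, N, hMA, hNB, hMN⟩ := lsp_sep hr hAB
    refine ⟨{F : δr | M ∉ F.1}, {F : δr | N ∉ F.1}, hgenopen M, hgenopen N,
      fun hM => hMA (K.2.1 M hM A hA), fun hN => hNB (H.2.1 N hN B hB), ?_⟩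
    rintro ⟨K', H'⟩ ⟨hK', hH'⟩
    simp only [Set.mem_compl_iff, Set.mem_setOf_eq]
    intro hlam
    exact hMN (hlam Mᶜ (rUlt_compl_mem K'.2 hK') Nᶜ (rUlt_compl_mem H'.2 hH'))
  set q : δr → Quot lam := Quot.mk lam with hq
  have hqcont : Continuous q := continuous_coinduced_rng
  -- saturations of the basic closed sets are closed
  have hsatclosed : ∀ S : Set X, IsClosed (q ⁻¹' (q '' {F : δr | S ∈ F.1})) := by
    intro S
    have himg : q ⁻¹' (q '' {F : δr | S ∈ F.1}) =
        Prod.snd '' ({p : δr × δr | lam p.1 p.2} ∩ ({F : δr | S ∈ F.1} ×ˢ Set.univ)) := by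
      ext H
      simp only [Set.mem_preimage, Set.mem_image, Set.mem_inter_iff, Set.mem_setOf_eq,
        Set.mem_prod, Set.mem_univ, and_true, Prod.exists]
      constructor
      · rintro ⟨K, hK, hKH⟩
        exact ⟨K, H, ⟨hmkeq.mp hKH, hK⟩, rfl⟩
      · rintro ⟨K, H', ⟨hlamKH, hK⟩, rfl⟩
        exact ⟨K, hK, hmkeq.mpr hlamKH⟩
    rw [himg]
    exact isClosedMap_snd_of_compactSpace _
      (hlamClosed.inter ((hmemclosed S).prod isClosed_univ))
  constructor
  · -- compactness
    refine ⟨?_⟩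
    have himg := isCompact_univ.image hqcont
    rwa [Set.image_univ, Set.range_eq_univ.mpr Quot.mk_surjective] at himg
  · -- Hausdorff
    refine ⟨fun x y hxy => ?_⟩
    obtain ⟨F, rfl⟩ := Quot.exists_rep x
    obtain ⟨G, rfl⟩ := Quot.exists_rep y
    have hFG : ¬ lam F G := fun h => hxy (Quot.sound h)
    have hex : ∃ A ∈ F.1, ∃ B ∈ G.1, ¬ r A B := by
      by_contra hno
      push_neg at hno
      exact hFG fun A hA B hB => hno A hA B hB
    obtain ⟨A, hA, B, hB, hAB⟩ := hex
    obtain ⟨M, N, hMA, hNB, hMN⟩ := lsp_sep hr hAB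
    refine ⟨(q '' {F : δr | M ∈ F.1})ᶜ, (q '' {F : δr | N ∈ F.1})ᶜ, ?_, ?_, ?_, ?_, ?_⟩
    · rw [isOpen_coinduced, Set.preimage_compl]
      exact (hsatclosed M).isOpen_compl
    · rw [isOpen_coinduced, Set.preimage_compl]
      exact (hsatclosed N).isOpen_compl
    · rintro ⟨K, hK, hKF⟩
      exact hMA (hmkeq.mp hKF M hK A hA)
    · rintro ⟨K, hK, hKG⟩
      exact hNB (hmkeq.mp hKG N hK B hB)
    · rw [Set.disjoint_left]
      rintro z hz1 hz2
      obtain ⟨H, rfl⟩ := Quot.exists_rep z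
      simp only [Set.mem_compl_iff, Set.mem_image, Set.mem_setOf_eq, not_exists, not_and] at hz1 hz2
      have hM : M ∉ H.1 := fun hM => hz1 H hM rfl
      have hN : N ∉ H.1 := fun hN => hz2 H hN rfl
      exact hMN (H.2.1 Mᶜ (rUlt_compl_mem H.2 hM) Nᶜ (rUlt_compl_mem H.2 hN))
end

section
/- Let X be a proper metric space and i : X → X̄ a coarse compactification of X with boundary ∂X = X̄ ∖ i(X). Define a relation r on subsets of X by: A r B iff (closure of i(A) in X̄) ∩ (closure of i(B) in X̄) ∩ ∂X ≠ ∅. Then r is a large-scale proximity relation on X. -/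
open Topology

open Filter Set in
private lemma key_closure {X Xb : Type*} [MetricSpace X]
    [TopologicalSpace Xb] [CompactSpace Xb] [T2Space Xb]
    (i : X → Xb) (hi : IsOpenEmbedding i)
    (hc : IsCoarseCompactification i)
    {E : Set (X × X)} (hE : IsEntourage E) {A A' : Set X}
    (hAE : A ⊆ EImage E A') {p : Xb} (hp : p ∈ closure (i '' A))
    (hpb : p ∉ Set.range i) : p ∈ closure (i '' A') := by
  rcases A.eq_empty_or_nonempty with rfl | hAne
  · simp at hp
  have : Nonempty X := ⟨hAne.choose⟩
  have hs : ∀ a : X, ∃ y : X, a ∈ A → y ∈ A' ∧ (a, y) ∈ E := by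
    intro a
    by_cases h : a ∈ A
    · obtain ⟨y, hy, hxy⟩ := hAE h
      exact ⟨y, fun _ => ⟨hy, hxy⟩⟩
    · exact ⟨Classical.arbitrary X, fun h' => absurd h' h⟩
  choose s hs using hs
  rcases mem_closure_iff_ultrafilter.mp hp with ⟨U, hAU, hUp⟩
  have hrange : Set.range i ∈ U := mem_of_superset hAU (image_subset_range _ _)
  let V : Ultrafilter X := U.comap hi.injective hrange
  have hAV : A ∈ V := by
    rw [Ultrafilter.mem_comap]
    exact hAU
  obtain ⟨q, -, hWq⟩ := isCompact_univ.ultrafilter_le_nhds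
    (V.map (fun a => i (s a))) (by simp [le_principal_iff])
  have hq : q ∈ closure (i '' A') := by
    apply mem_closure_iff_ultrafilter.mpr
    refine ⟨V.map (fun a => i (s a)), ?_, hWq⟩
    apply Ultrafilter.mem_map.mpr
    exact mem_of_superset hAV (fun a ha => ⟨s a, (hs a ha).1, rfl⟩)
  have hmapi : (V : Filter X).map i ≤ 𝓝 p := by
    calc (V : Filter X).map i = Filter.map i (Filter.comap i U) := rfl
    _ ≤ U := Filter.map_comap_le
    _ ≤ 𝓝 p := hUp
  have hP : (V.map (fun a => (i a, i (s a))) : Filter (Xb × Xb)) ≤ 𝓝 (p, q) := by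
    rw [nhds_prod_eq]
    apply Filter.le_prod.mpr
    constructor
    · exact Filter.tendsto_map'_iff.mpr hmapi
    · exact Filter.tendsto_map'_iff.mpr hWq
  have hpq : (p, q) ∈ closure ((fun p : X × X => (i p.1, i p.2)) '' E) := by
    apply mem_closure_iff_ultrafilter.mpr
    refine ⟨V.map (fun a => (i a, i (s a))), ?_, hP⟩
    apply Ultrafilter.mem_map.mpr
    exact mem_of_superset hAV (fun a ha => ⟨(a, s a), (hs a ha).2, rfl⟩)
  have h2 := hc E hE ⟨hpq, Or.inl ⟨hpb, trivial⟩⟩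
  have hpeq : p = q := h2.1
  rw [hpeq]
  exact hq

/-- the relation "closures meet on the boundary" of a coarse
compactification is a large-scale proximity relation. -/
theorem coarseCompactification_relation_isLSP {X Xb : Type*} [MetricSpace X] [ProperSpace X]
    [TopologicalSpace Xb] [CompactSpace Xb] [T2Space Xb]
    (i : X → Xb) (hi : IsOpenEmbedding i) (hd : DenseRange i)
    (hc : IsCoarseCompactification i) :
    IsLSP (fun A B : Set X =>
      (closure (i '' A) ∩ closure (i '' B) ∩ (Set.range i)ᶜ).Nonempty) := by
  have hbd : ∀ B : Set X, (closure (i '' B) ∩ (Set.range i)ᶜ).Nonempty ↔ ¬ Bornology.IsBounded B := by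
    intro B
    constructor
    · rintro ⟨p, hp, hpb⟩ hB
      have hcpt : IsCompact (closure B) := hB.isCompact_closure
      have h1 : closure (i '' B) ⊆ i '' closure B := by
        apply closure_minimal (Set.image_mono subset_closure)
        exact (hcpt.image hi.continuous).isClosed
      exact hpb (Set.image_subset_range i _ (h1 hp))
    · intro hB
      by_contra h
      apply hB
      rw [Set.not_nonempty_iff_eq_empty] at h
      have hsub : closure (i '' B) ⊆ Set.range i := by
        intro x hx
        by_contra hxr
        exact Set.eq_empty_iff_forall_notMem.mp h x ⟨hx, hxr⟩
      have hK : IsCompact (i ⁻¹' closure (i '' B)) :=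
        (hi.isInducing.isCompact_preimage_iff hsub).mpr isClosed_closure.isCompact
      exact (hK.isBounded).subset (fun b hb => subset_closure (Set.mem_image_of_mem i hb))
  constructor
  · intro B
    rw [Set.inter_self]
    constructor
    · intro h
      by_contra hB
      exact h ((hbd B).mpr hB)
    · intro hB h
      exact ((hbd B).mp h) hB
  · rintro A B ⟨p, ⟨h1, h2⟩, h3⟩
    exact ⟨p, ⟨h2, h1⟩, h3⟩
  · rintro A A' E hE hA'E hAE B ⟨p, ⟨hpA, hpB⟩, hpb⟩
    exact ⟨p, ⟨key_closure i hi hc hE hAE hpA hpb, hpB⟩, hpb⟩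
  · intro A B C
    rw [Set.image_union, closure_union, Set.union_inter_distrib_right,
      Set.union_inter_distrib_right, Set.union_nonempty]
  · intro A B hAB
    have hbdry : IsClosed ((Set.range i)ᶜ) := hi.isOpen_range.isClosed_compl
    have hKc : IsCompact (closure (i '' A) ∩ (Set.range i)ᶜ) :=
      (isClosed_closure.inter hbdry).isCompact
    have hLc : IsCompact (closure (i '' B) ∩ (Set.range i)ᶜ) :=
      (isClosed_closure.inter hbdry).isCompact
    have hdisj : Disjoint (closure (i '' A) ∩ (Set.range i)ᶜ)
        (closure (i '' B) ∩ (Set.range i)ᶜ) := by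
      rw [Set.disjoint_iff_inter_eq_empty, ← Set.not_nonempty_iff_eq_empty]
      rintro ⟨p, ⟨hpA, hpb⟩, hpB, -⟩
      exact hAB ⟨p, ⟨hpA, hpB⟩, hpb⟩
    obtain ⟨U, V, hUo, hVo, hKU, hLV, hUV⟩ := SeparatedNhds.of_isCompact_isCompact hKc hLc hdisj
    refine ⟨i ⁻¹' Uᶜ, i ⁻¹' Vᶜ, ?_, ?_, ?_⟩
    · ext x
      simp only [Set.mem_union, Set.mem_preimage, Set.mem_compl_iff, Set.mem_univ, iff_true]
      by_contra h
      push_neg at h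
      exact Set.disjoint_iff.mp hUV ⟨h.1, h.2⟩
    · rintro ⟨p, ⟨hpC, hpA⟩, hpb⟩
      have h1 : p ∈ Uᶜ := closure_minimal (by rintro y ⟨x, hx, rfl⟩; exact hx)
        (isClosed_compl_iff.mpr hUo) hpC
      exact h1 (hKU ⟨hpA, hpb⟩)
    · rintro ⟨p, ⟨hpD, hpB⟩, hpb⟩
      have h1 : p ∈ Vᶜ := closure_minimal (by rintro y ⟨x, hx, rfl⟩; exact hx)
        (isClosed_compl_iff.mpr hVo) hpD
      exact h1 (hLV ⟨hpB, hpb⟩)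
end

section
/- Let X be a proper metric space and i : X → X̄ a compactification. Then X̄ is a coarse compactification if and only if for every continuous function ψ : X̄ → ℝ, the restriction φ = ψ ∘ i : X → ℝ is a Higson function. -/
open Topology

/-- a compactification is coarse iff every continuous `ψ : X̄ → ℝ`
restricts to a Higson function on `X`. -/
theorem coarse_iff_restrictions_higson {X Xb : Type*} [MetricSpace X] [ProperSpace X]
    [TopologicalSpace Xb] [CompactSpace Xb] [T2Space Xb]
    (i : X → Xb) (hi : IsOpenEmbedding i) (hd : DenseRange i) :
    IsCoarseCompactification i ↔
      ∀ ψ : Xb → ℝ, Continuous ψ → IsHigson (ψ ∘ i) := by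
  constructor
  · -- coarse → restrictions are Higson
    intro hc ψ hψ
    refine ⟨hψ.comp hi.continuous, ?_, ?_⟩
    · obtain ⟨C, hC⟩ := isBounded_iff_forall_norm_le.1 (isCompact_range hψ).isBounded
      exact ⟨C, fun x => by
        have := hC _ (Set.mem_range_self (i x))
        simpa [Real.norm_eq_abs] using this⟩
    · intro E hE ε hε
      by_contra hcon
      push_neg at hcon
      obtain ⟨C, hC⟩ := hE
      -- get a basepoint
      obtain ⟨p0, hp0, -⟩ := hcon ∅ Bornology.isBounded_empty
      set x₀ := p0.1 with hx₀
      have key : ∀ n : ℕ, ∃ p ∈ E,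
          (p.1 ∉ Metric.closedBall x₀ n ∨ p.2 ∉ Metric.closedBall x₀ n) ∧
          ε ≤ |ψ (i p.1) - ψ (i p.2)| := by
        intro n
        obtain ⟨p, hpE, hpB, hpe⟩ := hcon (Metric.closedBall x₀ n) Metric.isBounded_closedBall
        exact ⟨p, hpE, hpB, hpe⟩
      choose f hfE hfB hfε using key
      have hfar : ∀ n : ℕ, (n : ℝ) - C ≤ dist (f n).1 x₀ := by
        intro n
        rcases hfB n with h1 | h2
        · have : (n : ℝ) < dist (f n).1 x₀ := by
            simpa [Metric.mem_closedBall, not_le] using h1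
          linarith [dist_nonneg (x := (f n).1) (y := (f n).2), hC _ (hfE n)]
        · have h2' : (n : ℝ) < dist (f n).2 x₀ := by
            simpa [Metric.mem_closedBall, not_le] using h2
          have htr := dist_triangle (f n).2 (f n).1 x₀
          have hc' := hC _ (hfE n)
          rw [dist_comm (f n).2 (f n).1] at htr
          linarith
      -- ultrafilter
      set V : Ultrafilter ℕ := Ultrafilter.of Filter.atTop with hV
      have hVle : (V : Filter ℕ) ≤ Filter.atTop := Ultrafilter.of_le _
      set g : ℕ → Xb × Xb := fun n => (i (f n).1, i (f n).2) with hg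
      obtain ⟨pq, -, hpq⟩ := isCompact_univ.ultrafilter_le_nhds (V.map g)
        (by simp [Filter.le_principal_iff])
      have htend : Filter.Tendsto g (V : Filter ℕ) (𝓝 pq) := by
        rw [Filter.Tendsto]
        exact_mod_cast hpq
      have hmem : pq ∈ closure ((fun p : X × X => (i p.1, i p.2)) '' E) := by
        refine mem_closure_iff_ultrafilter.2 ⟨V.map g, ?_, hpq⟩
        refine Filter.mem_map.2 (Filter.univ_mem' ?_)
        intro n
        exact ⟨f n, hfE n, rfl⟩
      -- pq.1 is not in the range of i
      have hnr : pq.1 ∉ Set.range i := by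
        rintro ⟨x, hx⟩
        have h1 : Filter.Tendsto (fun n => i (f n).1) (V : Filter ℕ) (𝓝 pq.1) :=
          (continuous_fst.tendsto pq).comp htend
        have hO : i '' Metric.ball x 1 ∈ 𝓝 pq.1 := by
          rw [← hx]
          exact (hi.isOpenMap _ Metric.isOpen_ball).mem_nhds ⟨x, Metric.mem_ball_self one_pos, rfl⟩
        have h2 : ∀ᶠ n in (V : Filter ℕ), i (f n).1 ∈ i '' Metric.ball x 1 := h1 hO
        have h3' : ∀ᶠ n : ℕ in Filter.atTop, dist x x₀ + 1 + C < (n : ℝ) := by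
          rw [Filter.eventually_atTop]
          obtain ⟨m, hm⟩ := exists_nat_gt (dist x x₀ + 1 + C)
          exact ⟨m, fun n hn => hm.trans_le (Nat.cast_le.2 hn)⟩
        have h3 : ∀ᶠ n : ℕ in (V : Filter ℕ), dist x x₀ + 1 + C < (n : ℝ) := hVle h3'
        obtain ⟨n, hn1, hn2⟩ := (h2.and h3).exists
        obtain ⟨y, hy, hyx⟩ := hn1
        have hyeq : y = (f n).1 := hi.injective hyx
        rw [hyeq] at hy
        have : dist (f n).1 x₀ < dist x x₀ + 1 := by
          have := dist_triangle (f n).1 x x₀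
          have hball : dist (f n).1 x < 1 := Metric.mem_ball.1 hy
          linarith
        linarith [hfar n]
      have := hc E ⟨C, hC⟩ ⟨hmem, Or.inl ⟨hnr, Set.mem_univ _⟩⟩
      obtain ⟨heq, -⟩ := this
      -- contradiction with ε ≤ |...|
      have htψ : Filter.Tendsto (fun n => |ψ (i (f n).1) - ψ (i (f n).2)|)
          (V : Filter ℕ) (𝓝 |ψ pq.1 - ψ pq.2|) := by
        have h1 : Filter.Tendsto (fun n => ψ (i (f n).1)) (V : Filter ℕ) (𝓝 (ψ pq.1)) :=
          (hψ.tendsto pq.1).comp ((continuous_fst.tendsto pq).comp htend)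
        have h2 : Filter.Tendsto (fun n => ψ (i (f n).2)) (V : Filter ℕ) (𝓝 (ψ pq.2)) :=
          (hψ.tendsto pq.2).comp ((continuous_snd.tendsto pq).comp htend)
        exact (h1.sub h2).abs
      have : ε ≤ |ψ pq.1 - ψ pq.2| :=
        ge_of_tendsto htψ (Filter.Eventually.of_forall hfε)
      rw [heq] at this
      simp at this
      linarith
  · -- restrictions Higson → coarse
    intro h E hE pq hpq
    obtain ⟨hcl, hbd⟩ := hpq
    have hkey : pq.1 = pq.2 := by
      by_contra hne
      obtain ⟨ψ, hψ0, hψ1, hψm⟩ := exists_continuous_zero_one_of_isClosed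
        (isClosed_singleton (x := pq.1)) (isClosed_singleton (x := pq.2))
        (Set.disjoint_singleton.2 hne)
      obtain ⟨-, -, hhig⟩ := h ψ ψ.continuous
      obtain ⟨B, hB, hBsep⟩ := hhig E hE (1/3) (by norm_num)
      have hKc : IsCompact (i '' closure B) :=
        (Metric.isCompact_of_isClosed_isBounded isClosed_closure hB.closure).image hi.continuous
      have hKcl : IsClosed (i '' closure B) := hKc.isClosed
      have hψp : ψ pq.1 = 0 := hψ0 rfl
      have hψq : ψ pq.2 = 1 := hψ1 rfl
      rcases hbd with hb1 | hb2
      · -- pq.1 ∉ range i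
        have hp1 : pq.1 ∉ Set.range i := hb1.1
        have hW : (ψ ⁻¹' Set.Iio (1/3) ∩ (i '' closure B)ᶜ) ×ˢ (ψ ⁻¹' Set.Ioi (2/3)) ∈ 𝓝 pq := by
          have hopen : IsOpen ((ψ ⁻¹' Set.Iio (1/3) ∩ (i '' closure B)ᶜ) ×ˢ (ψ ⁻¹' Set.Ioi (2/3))) :=
            ((isOpen_Iio.preimage ψ.continuous).inter hKcl.isOpen_compl).prod
              (isOpen_Ioi.preimage ψ.continuous)
          refine hopen.mem_nhds ⟨⟨?_, ?_⟩, ?_⟩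
          · simp only [Set.mem_preimage, Set.mem_Iio, hψp]; norm_num
          · exact fun hp => hp1 (Set.image_subset_range _ _ hp)
          · simp only [Set.mem_preimage, Set.mem_Ioi, hψq]; norm_num
        obtain ⟨z, hz1, hz2⟩ := mem_closure_iff_nhds.1 hcl _ hW
        obtain ⟨p, hpE, hpz⟩ := hz2
        rw [← hpz] at hz1
        obtain ⟨⟨hx1, hx2⟩, hy1⟩ := hz1
        have hxB : p.1 ∉ B := fun hpb => hx2 ⟨p.1, subset_closure hpb, rfl⟩
        have := hBsep p hpE (Or.inl hxB)
        have hlt : ψ (i p.1) < 1/3 := hx1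
        have hgt : (2:ℝ)/3 < ψ (i p.2) := hy1
        simp only [Function.comp_apply] at this
        rw [abs_sub_lt_iff] at this
        linarith [this.2]
      · -- pq.2 ∉ range i
        have hp2 : pq.2 ∉ Set.range i := hb2.2
        have hW : (ψ ⁻¹' Set.Iio (1/3)) ×ˢ (ψ ⁻¹' Set.Ioi (2/3) ∩ (i '' closure B)ᶜ) ∈ 𝓝 pq := by
          have hopen : IsOpen ((ψ ⁻¹' Set.Iio (1/3)) ×ˢ (ψ ⁻¹' Set.Ioi (2/3) ∩ (i '' closure B)ᶜ)) :=
            (isOpen_Iio.preimage ψ.continuous).prod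
              ((isOpen_Ioi.preimage ψ.continuous).inter hKcl.isOpen_compl)
          refine hopen.mem_nhds ⟨?_, ?_, ?_⟩
          · simp only [Set.mem_preimage, Set.mem_Iio, hψp]; norm_num
          · simp only [Set.mem_preimage, Set.mem_Ioi, hψq]; norm_num
          · exact fun hp => hp2 (Set.image_subset_range _ _ hp)
        obtain ⟨z, hz1, hz2⟩ := mem_closure_iff_nhds.1 hcl _ hW
        obtain ⟨p, hpE, hpz⟩ := hz2
        rw [← hpz] at hz1
        obtain ⟨hx1, hy1, hy2⟩ := hz1
        have hyB : p.2 ∉ B := fun hpb => hy2 ⟨p.2, subset_closure hpb, rfl⟩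
        have := hBsep p hpE (Or.inr hyB)
        have hlt : ψ (i p.1) < 1/3 := hx1
        have hgt : (2:ℝ)/3 < ψ (i p.2) := hy1
        simp only [Function.comp_apply] at this
        rw [abs_sub_lt_iff] at this
        linarith [this.2]
    refine ⟨hkey, ?_⟩
    rcases hbd with hb1 | hb2
    · exact hb1.1
    · rw [hkey]; exact hb2.2
end

section
/- Let X be a proper metric space with at most one end. Then for every coarse compactification i : X → X̄ of X, the boundary ∂X = X̄ ∖ i(X) is a preconnected subspace of X̄. -/
open Topology

/-- If `p` is a boundary point lying in an open set `u`, then `i ⁻¹' u` is unbounded. -/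
lemma unbounded_preimage_of_boundary_mem {X Xb : Type*} [MetricSpace X] [ProperSpace X]
    [TopologicalSpace Xb] [T2Space Xb] {i : X → Xb} (hi : IsOpenEmbedding i)
    (hd : DenseRange i) {u : Set Xb} (hu : IsOpen u) {p : Xb} (hp : p ∉ Set.range i)
    (hpu : p ∈ u) : ¬ Bornology.IsBounded (i ⁻¹' u) := by
  intro hb
  have hcl : IsCompact (closure (i ⁻¹' u)) := hb.isCompact_closure
  have h1 : p ∈ closure (i '' (i ⁻¹' u)) := by
    rw [mem_closure_iff]
    intro n hn hpn
    obtain ⟨x, hx⟩ := hd.exists_mem_open (hn.inter hu) ⟨p, hpn, hpu⟩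
    exact ⟨i x, hx.1, x, hx.2, rfl⟩
  have h2 : closure (i '' (i ⁻¹' u)) ⊆ i '' closure (i ⁻¹' u) :=
    closure_minimal (Set.image_mono subset_closure)
      (hcl.image hi.continuous).isClosed
  exact hp (Set.image_subset_range _ _ (h2 h1))

/-- if `X` has at most one end then the boundary of every coarse
compactification is preconnected. -/
theorem boundary_preconnected_of_one_ended {X Xb : Type*} [MetricSpace X] [ProperSpace X]
    [TopologicalSpace Xb] [CompactSpace Xb] [T2Space Xb]
    (hone : ∀ A : Set X, Close A Aᶜ ∨ Bornology.IsBounded A ∨ Bornology.IsBounded Aᶜ)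
    (i : X → Xb) (hi : IsOpenEmbedding i) (hd : DenseRange i)
    (hc : IsCoarseCompactification i) :
    IsPreconnected ((Set.range i)ᶜ : Set Xb) := by
  intro u v hu hv hsub hsu hsv
  by_contra hne
  have hdisjUV : ∀ p ∉ Set.range i, p ∈ u → p ∈ v → False := fun p hp hpu hpv =>
    hne ⟨p, hp, hpu, hpv⟩
  have hsclosed : IsClosed ((Set.range i)ᶜ : Set Xb) := hi.isOpen_range.isClosed_compl
  -- separate the two closed pieces of the boundary
  obtain ⟨u₀, v₀, hou₀, hov₀, hUu₀, hVv₀, hdisj⟩ :=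
    SeparatedNhds.of_isCompact_isCompact
      ((hsclosed.inter hv.isClosed_compl).isCompact)
      ((hsclosed.inter hu.isClosed_compl).isCompact)
      (by
        rw [Set.disjoint_left]
        rintro p ⟨hp, hpv⟩ ⟨-, hpu⟩
        rcases hsub hp with h | h
        exacts [hpu h, hpv h])
  set u' : Set Xb := u ∩ u₀ with hu'def
  set v' : Set Xb := v ∩ v₀ with hv'def
  have hu' : IsOpen u' := hu.inter hou₀
  have hv' : IsOpen v' := hv.inter hov₀
  have hdisj' : Disjoint u' v' :=
    hdisj.mono Set.inter_subset_right Set.inter_subset_right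
  have hsub' : ∀ p ∉ Set.range i, p ∈ u' ∪ v' := by
    intro p hp
    by_cases hpu : p ∈ u
    · have hpv : p ∉ v := fun hpv => hdisjUV p hp hpu hpv
      exact Or.inl ⟨hpu, hUu₀ ⟨hp, hpv⟩⟩
    · rcases hsub hp with h | h
      · exact absurd h hpu
      · exact Or.inr ⟨h, hVv₀ ⟨hp, hpu⟩⟩
  obtain ⟨pu, hpu1, hpu2⟩ := hsu
  have hpu' : pu ∈ u' := ⟨hpu2, hUu₀ ⟨hpu1, fun hpv => hdisjUV pu hpu1 hpu2 hpv⟩⟩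
  obtain ⟨pv, hpv1, hpv2⟩ := hsv
  have hpv' : pv ∈ v' := ⟨hpv2, hVv₀ ⟨hpv1, fun hpuu => hdisjUV pv hpv1 hpuu hpv2⟩⟩
  set A : Set X := i ⁻¹' u' with hAdef
  set B : Set X := i ⁻¹' v' with hBdef
  have hAub : ¬ Bornology.IsBounded A :=
    unbounded_preimage_of_boundary_mem hi hd hu' hpu1 hpu'
  have hBub : ¬ Bornology.IsBounded B :=
    unbounded_preimage_of_boundary_mem hi hd hv' hpv1 hpv'
  have hBA : B ⊆ Aᶜ := fun x hx hx' => Set.disjoint_left.mp hdisj' hx' hx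
  rcases hone A with hclose | hb | hb
  · obtain ⟨R, hR0, a, b, ha, hb', hab, hunb⟩ := hclose
    -- the complement of `u' ∪ v'` is compact and inside the range of `i`
    have hKsub : (u' ∪ v')ᶜ ⊆ Set.range i := by
      intro p hp
      by_contra hpr
      exact hp (hsub' p hpr)
    have hKxcomp : IsCompact (i ⁻¹' (u' ∪ v')ᶜ) :=
      hi.isInducing.isCompact_preimage'
        ((hu'.union hv').isClosed_compl.isCompact) hKsub
    set x₀ : X := a 0 with hx₀
    obtain ⟨r0, hr0⟩ := hKxcomp.isBounded.subset_closedBall x₀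
    set r : ℝ := max r0 0 with hrdef
    have hr : i ⁻¹' (u' ∪ v')ᶜ ⊆ Metric.closedBall x₀ r :=
      hr0.trans (Metric.closedBall_subset_closedBall (le_max_left _ _))
    have hr0' : (0:ℝ) ≤ r := le_max_right _ _
    have hsel : ∀ k : ℕ, ∃ n, (k:ℝ) + R + r + 1 < dist (a n) x₀ := by
      intro k
      by_contra h
      push_neg at h
      exact hunb ((Metric.isBounded_closedBall (x := x₀) (r := (k:ℝ)+R+r+1)).subset
        (by rintro _ ⟨n, rfl⟩; exact Metric.mem_closedBall.mpr (h n)))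
    choose nk hnk using hsel
    set c : ℕ → X := fun k => a (nk k) with hcdef
    set d : ℕ → X := fun k => b (nk k) with hddef
    have hcA : ∀ k, i (c k) ∈ u' := fun k => ha (nk k)
    have hdv' : ∀ k, i (d k) ∈ v' := by
      intro k
      have h1 : dist (c k) x₀ ≤ R + dist (d k) x₀ :=
        (dist_triangle (c k) (d k) x₀).trans (by
          have := hab (nk k); linarith)
      have h2 : r < dist (d k) x₀ := by
        have h3 := hnk k
        have : (0:ℝ) ≤ (k:ℝ) := Nat.cast_nonneg k
        linarith
      have hdK : d k ∉ i ⁻¹' (u' ∪ v')ᶜ := fun hmem =>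
        absurd (hr hmem) (by simpa [Metric.mem_closedBall] using h2.not_ge)
      have hor : i (d k) ∈ u' ∪ v' := by by_contra h; exact hdK h
      rcases hor with h | h
      · exact absurd h (hb' (nk k))
      · exact h
    -- take a cluster point of the pair sequence
    set f : ℕ → Xb × Xb := fun k => (i (c k), i (d k)) with hfdef
    obtain ⟨z, hz⟩ := exists_clusterPt_of_compactSpace (Filter.map f Filter.atTop)
    obtain ⟨p, q⟩ := z
    have hfreq : ∀ n ∈ 𝓝 ((p, q) : Xb × Xb), ∃ᶠ k in Filter.atTop, f k ∈ n :=
      fun n hn => mapClusterPt_iff_frequently.mp hz n hn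
    -- p is a boundary point
    have hpnr : p ∉ Set.range i := by
      rintro ⟨x, rfl⟩
      have hnopen : IsOpen (i '' Metric.ball x 1) := hi.isOpenMap _ Metric.isOpen_ball
      have hmem : ((i '' Metric.ball x 1) ×ˢ (Set.univ : Set Xb)) ∈ 𝓝 ((i x, q) : Xb × Xb) :=
        prod_mem_nhds (hnopen.mem_nhds ⟨x, Metric.mem_ball_self one_pos, rfl⟩)
          Filter.univ_mem
      obtain ⟨k, hkN, hk⟩ := Filter.frequently_atTop.mp (hfreq _ hmem)
        (⌈1 + dist x x₀⌉₊)
      obtain ⟨y, hy1, hy2⟩ := hk.1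
      have hcy : c k = y := hi.injective hy2.symm
      have h1 : dist (c k) x₀ ≤ 1 + dist x x₀ := by
        have := dist_triangle (c k) x x₀
        rw [hcy]
        have hlt : dist y x < 1 := Metric.mem_ball.mp hy1
        rw [hcy] at this
        linarith
      have h2 : (1 : ℝ) + dist x x₀ ≤ (k : ℝ) := by
        calc (1:ℝ) + dist x x₀ ≤ (⌈1 + dist x x₀⌉₊ : ℝ) := Nat.le_ceil _
        _ ≤ (k : ℝ) := Nat.cast_le.mpr hkN
      have h3 := hnk k
      linarith
    -- coarseness forces p = q
    have hE : IsEntourage (Set.range fun k => (c k, d k)) := by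
      refine ⟨R, ?_⟩
      rintro _ ⟨k, rfl⟩
      exact hab (nk k)
    have hzclos : ((p, q) : Xb × Xb) ∈
        closure ((fun p : X × X => (i p.1, i p.2)) '' (Set.range fun k => (c k, d k))) := by
      rw [mem_closure_iff_clusterPt]
      refine hz.mono (Filter.le_principal_iff.mpr ?_)
      rw [Filter.mem_map]
      exact Filter.Eventually.of_forall fun k => ⟨(c k, d k), ⟨k, rfl⟩, rfl⟩
    have hdiag := hc _ hE ⟨hzclos, Or.inl (Set.mem_prod.mpr ⟨hpnr, trivial⟩)⟩
    have hpq : p = q := hdiag.1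
    -- derive the contradiction
    rcases hsub' p hpnr with hp | hp
    · have hmem : ((Set.univ : Set Xb) ×ˢ u') ∈ 𝓝 ((p, q) : Xb × Xb) :=
        prod_mem_nhds Filter.univ_mem (hu'.mem_nhds (hpq ▸ hp))
      obtain ⟨k, hk⟩ := (hfreq _ hmem).exists
      exact Set.disjoint_left.mp hdisj' hk.2 (hdv' k)
    · have hmem : (v' ×ˢ (Set.univ : Set Xb)) ∈ 𝓝 ((p, q) : Xb × Xb) :=
        prod_mem_nhds (hv'.mem_nhds hp) Filter.univ_mem
      obtain ⟨k, hk⟩ := (hfreq _ hmem).exists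
      exact Set.disjoint_left.mp hdisj' (hcA k) hk.1
  · exact hAub hb
  · exact hBub (hb.subset hBA)
end

section
/- Let X be a proper metric space and let A, B ⊆ X be nonempty subsets with d(A,B) = inf{d(a,b) : a ∈ A, b ∈ B} > 0 and ¬(A ≍ B). Then the function φ_{A,B} : X → ℝ defined by φ_{A,B}(x) = d(x,A) / (d(x,A) + d(x,B)) is a Higson function. -/
open Topology

lemma phiAB_key (fx gx fy gy C : ℝ) (hfy : 0 ≤ fy) (hgy : 0 ≤ gy)
    (hDx : 0 < fx + gx) (hDy : 0 < fy + gy)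
    (hf : |fx - fy| ≤ C) (hg : |gx - gy| ≤ C) :
    |fx / (fx + gx) - fy / (fy + gy)| ≤ C / (fx + gx) := by
  have hC : 0 ≤ C := le_trans (abs_nonneg _) hf
  have hnum : |fx * (fy + gy) - (fx + gx) * fy| ≤ C * (fy + gy) := by
    have h1 : fx * (fy + gy) - (fx + gx) * fy = gy * (fx - fy) + fy * (gy - gx) := by ring
    rw [h1]
    calc |gy * (fx - fy) + fy * (gy - gx)| ≤ |gy * (fx - fy)| + |fy * (gy - gx)| := abs_add_le _ _
      _ = gy * |fx - fy| + fy * |gy - gx| := by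
          rw [abs_mul, abs_mul, abs_of_nonneg hgy, abs_of_nonneg hfy]
      _ ≤ gy * C + fy * C := by
          have := abs_sub_comm gx gy ▸ hg
          gcongr
      _ = C * (fy + gy) := by ring
  have heq : C / (fx + gx) = C * (fy + gy) / ((fx + gx) * (fy + gy)) := by
    rw [mul_comm (fx + gx), ← div_div, mul_div_assoc, div_self hDy.ne', mul_one]
  rw [div_sub_div _ _ hDx.ne' hDy.ne', abs_div, abs_of_pos (mul_pos hDx hDy), heq]
  gcongr

lemma abs_infDist_sub_le {X : Type*} [MetricSpace X] (x y : X) (s : Set X) :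
    |Metric.infDist x s - Metric.infDist y s| ≤ dist x y := by
  rw [abs_sub_le_iff]
  constructor
  · linarith [Metric.infDist_le_infDist_add_dist (x := x) (y := y) (s := s)]
  · linarith [Metric.infDist_le_infDist_add_dist (x := y) (y := x) (s := s), dist_comm x y]

/-- `φ_{A,B}(x) = d(x,A)/(d(x,A)+d(x,B))` is a Higson function when
`A, B` are nonempty, at positive distance, and not close. -/
theorem phiAB_isHigson {X : Type*} [MetricSpace X] [ProperSpace X]
    (A B : Set X) (hA : A.Nonempty) (hB : B.Nonempty)
    (hdist : ∃ ε > (0:ℝ), ∀ a ∈ A, ∀ b ∈ B, ε ≤ dist a b)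
    (hnc : ¬ Close A B) :
    IsHigson (fun x : X => Metric.infDist x A / (Metric.infDist x A + Metric.infDist x B)) := by
  obtain ⟨ε, hε, hab⟩ := hdist
  -- denominator lower bound
  have hD : ∀ x : X, ε ≤ Metric.infDist x A + Metric.infDist x B := by
    intro x
    by_contra h
    push_neg at h
    have h1 : Metric.infDist x A < ε - Metric.infDist x B := by linarith
    obtain ⟨a, haA, ha⟩ := (Metric.infDist_lt_iff hA).mp h1
    have h2 : Metric.infDist x B < ε - dist x a := by linarith
    obtain ⟨b, hbB, hb⟩ := (Metric.infDist_lt_iff hB).mp h2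
    have : dist a b ≤ dist a x + dist x b := dist_triangle a x b
    rw [dist_comm a x] at this
    have := hab a haA b hbB
    linarith
  have hDpos : ∀ x : X, 0 < Metric.infDist x A + Metric.infDist x B :=
    fun x => lt_of_lt_of_le hε (hD x)
  refine ⟨?_, ⟨1, ?_⟩, ?_⟩
  · exact (Metric.continuous_infDist_pt A).div
      ((Metric.continuous_infDist_pt A).add (Metric.continuous_infDist_pt B))
      (fun x => (hDpos x).ne')
  · intro x
    rw [abs_le]
    constructor
    · have : (0:ℝ) ≤ Metric.infDist x A / (Metric.infDist x A + Metric.infDist x B) :=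
        div_nonneg Metric.infDist_nonneg (hDpos x).le
      linarith
    · apply div_le_one_of_le₀ _ (hDpos x).le
      have := Metric.infDist_nonneg (x := x) (s := B)
      linarith
  · intro E hE ε' hε'
    obtain ⟨C, hC⟩ := hE
    set C' := max C 0 with hC'def
    have hC'0 : 0 ≤ C' := le_max_right _ _
    set M : ℝ := C' / ε' + 1 with hMdef
    have hM : 0 < M := by positivity
    have hCM : C' / M < ε' := by
      rw [div_lt_iff₀ hM, hMdef]
      have : ε' * (C' / ε') = C' := by field_simp
      nlinarith
    refine ⟨{x | Metric.infDist x A + Metric.infDist x B ≤ M}, ?_, ?_⟩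
    · by_contra hbd
      obtain ⟨x₀, hx₀⟩ := id hA
      rw [Metric.isBounded_iff_subset_closedBall x₀] at hbd
      push_neg at hbd
      have hseq : ∀ n : ℕ, ∃ x : X,
          (Metric.infDist x A + Metric.infDist x B ≤ M) ∧ (n : ℝ) < dist x x₀ := by
        intro n
        obtain ⟨x, hxS, hxn⟩ := Set.not_subset.mp (hbd n)
        refine ⟨x, hxS, ?_⟩
        by_contra h
        push_neg at h
        exact hxn (Metric.mem_closedBall.mpr h)
      choose x hxS hxd using hseq
      have hfa : ∀ n, ∃ a ∈ A, dist (x n) a < M + 1 := by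
        intro n
        apply (Metric.infDist_lt_iff hA).mp
        have := Metric.infDist_nonneg (x := x n) (s := B)
        linarith [hxS n]
      have hfb : ∀ n, ∃ b ∈ B, dist (x n) b < M + 1 := by
        intro n
        apply (Metric.infDist_lt_iff hB).mp
        have := Metric.infDist_nonneg (x := x n) (s := A)
        linarith [hxS n]
      choose a haA hax using hfa
      choose b hbB hbx using hfb
      apply hnc
      refine ⟨2 * M + 2, by linarith, a, b, haA, hbB, fun n => ?_, ?_⟩
      · have := dist_triangle (a n) (x n) (b n)
        rw [dist_comm (a n) (x n)] at this
        linarith [hax n, hbx n]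
      · intro hbnd
        rw [Metric.isBounded_iff_subset_closedBall x₀] at hbnd
        obtain ⟨r, hr⟩ := hbnd
        set n : ℕ := ⌈r + M + 1⌉₊ with hn
        have h1 : r + M + 1 ≤ (n : ℝ) := Nat.le_ceil _
        have h2 : dist (a n) x₀ ≤ r := by
          have := hr (Set.mem_range_self n)
          exact Metric.mem_closedBall.mp this
        have h3 : dist (x n) x₀ ≤ dist (x n) (a n) + dist (a n) x₀ := dist_triangle _ _ _
        have := hxd n
        linarith [hax n]
    · rintro ⟨p1, p2⟩ hp hpB
      have hdp : dist p1 p2 ≤ C' := le_trans (hC _ hp) (le_max_left _ _)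
      have hfd : |Metric.infDist p1 A - Metric.infDist p2 A| ≤ C' :=
        le_trans (abs_infDist_sub_le p1 p2 A) hdp
      have hgd : |Metric.infDist p1 B - Metric.infDist p2 B| ≤ C' :=
        le_trans (abs_infDist_sub_le p1 p2 B) hdp
      simp only [Set.mem_setOf_eq, not_le] at hpB
      rcases hpB with h | h
      · calc |Metric.infDist p1 A / (Metric.infDist p1 A + Metric.infDist p1 B)
            - Metric.infDist p2 A / (Metric.infDist p2 A + Metric.infDist p2 B)|
            ≤ C' / (Metric.infDist p1 A + Metric.infDist p1 B) :=
              phiAB_key _ _ _ _ _ Metric.infDist_nonneg Metric.infDist_nonneg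
                (hDpos p1) (hDpos p2) hfd hgd
          _ ≤ C' / M := by gcongr
          _ < ε' := hCM
      · rw [abs_sub_comm]
        calc |Metric.infDist p2 A / (Metric.infDist p2 A + Metric.infDist p2 B)
            - Metric.infDist p1 A / (Metric.infDist p1 A + Metric.infDist p1 B)|
            ≤ C' / (Metric.infDist p2 A + Metric.infDist p2 B) :=
              phiAB_key _ _ _ _ _ Metric.infDist_nonneg Metric.infDist_nonneg
                (hDpos p2) (hDpos p1) (by rw [abs_sub_comm]; exact hfd) (by rw [abs_sub_comm]; exact hgd)
          _ ≤ C' / M := by gcongr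
          _ < ε' := hCM
end

section
/- Let X be a proper metric space. In the real Banach algebra of bounded continuous functions X → ℝ with the sup norm, let 𝒜 be the subalgebra generated by the constant function 1 together with all functions φ_{A,B}(x) = d(x,A)/(d(x,A) + d(x,B)), where A, B range over nonempty subsets of X with d(A,B) > 0 and ¬(A ≍ B). Then the closure of 𝒜 in the sup norm equals the set of all Higson functions on X. -/
open Topology

open Metric Bornology Filter

namespace HigsonAux
variable {X : Type*} [MetricSpace X]

lemma exists_seq_of_unbounded {S : Set X} (hS : ¬ IsBounded S) :
    ∃ u : ℕ → X, (∀ n, u n ∈ S) ∧ ¬ IsBounded (Set.range u) := by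
  have hne : S.Nonempty := by
    rcases S.eq_empty_or_nonempty with h | h
    · exact absurd (h ▸ Bornology.isBounded_empty) hS
    · exact h
  obtain ⟨x₀, _⟩ := hne
  have h : ∀ n : ℕ, ∃ x ∈ S, ¬ dist x x₀ ≤ n := by
    intro n
    by_contra h; push_neg at h
    exact hS ((isBounded_iff_subset_closedBall x₀).2 ⟨n, fun x hx => h x hx⟩)
  choose u hu hd using h
  refine ⟨u, hu, fun hb => ?_⟩
  obtain ⟨r, hr⟩ := (isBounded_iff_subset_closedBall x₀).1 hb
  obtain ⟨n, hn⟩ := exists_nat_ge r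
  exact hd n (le_trans (hr (Set.mem_range_self n)) hn)

lemma exists_pos_dist [ProperSpace X] {A B : Set X} (hA : IsClosed A) (hB : IsClosed B)
    (hdis : Disjoint A B) (hnc : ¬ Close A B) :
    ∃ ε > (0:ℝ), ∀ a ∈ A, ∀ b ∈ B, ε ≤ dist a b := by
  by_contra h; push_neg at h
  have h' : ∀ n : ℕ, ∃ a ∈ A, ∃ b ∈ B, dist a b < 1/(n+1) := by
    intro n
    obtain ⟨a, ha, b, hb, hab⟩ := h (1/(n+1)) (by positivity)
    exact ⟨a, ha, b, hb, hab⟩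
  choose a ha b hb hab using h'
  by_cases hbd : IsBounded (Set.range a)
  · obtain ⟨L, _, φ, hφ, hten⟩ := hbd.isCompact_closure.tendsto_subseq
      (fun n => subset_closure (Set.mem_range_self n))
    have hdist0 : Tendsto (fun n => dist (a (φ n)) (b (φ n))) atTop (𝓝 0) := by
      apply squeeze_zero (fun n => dist_nonneg) (g := fun n : ℕ => 1/((n:ℝ)+1))
        (fun n => ?_) tendsto_one_div_add_atTop_nhds_zero_nat
      refine (hab (φ n)).le.trans (one_div_le_one_div_of_le (by positivity) ?_)
      have := hφ.le_apply (x := n)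
      push_cast; linarith [(Nat.cast_le (α := ℝ)).2 this]
    have htb : Tendsto (b ∘ φ) atTop (𝓝 L) := hten.congr_dist hdist0
    have hLA : L ∈ A := hA.mem_of_tendsto hten (Eventually.of_forall fun n => ha (φ n))
    have hLB : L ∈ B := hB.mem_of_tendsto htb (Eventually.of_forall fun n => hb (φ n))
    exact Set.disjoint_left.1 hdis hLA hLB
  · refine hnc ⟨1, zero_le_one, a, b, ha, hb, fun n => (hab n).le.trans ?_, hbd⟩
    rw [div_le_one (by positivity)]
    linarith [Nat.cast_nonneg (α := ℝ) n]

lemma notClose_of_higson {f : X → ℝ} (hf : IsHigson f) {s δ : ℝ} (hδ : 0 < δ) :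
    ¬ Close {x | f x ≤ s} {x | s + δ ≤ f x} := by
  rintro ⟨R, _, a, b, ha, hb, hab, hub⟩
  obtain ⟨B, hBb, hsm⟩ := hf.2.2 {p | dist p.1 p.2 ≤ R} ⟨R, fun p hp => hp⟩ δ hδ
  obtain ⟨n, hn⟩ : ∃ n, a n ∉ B := by
    by_contra h; push_neg at h
    exact hub (hBb.subset (Set.range_subset_iff.2 h))
  have h3 := hsm (a n, b n) (hab n) (Or.inl hn)
  have h1 : f (a n) ≤ s := ha n
  have h2 : s + δ ≤ f (b n) := hb n
  rw [abs_lt] at h3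
  simp only at h3
  linarith [h3.1]

lemma den_ge {A B : Set X} (hA : A.Nonempty) (hB : B.Nonempty) {ε₀ : ℝ}
    (hsep : ∀ a ∈ A, ∀ b ∈ B, ε₀ ≤ dist a b) (x : X) :
    ε₀ ≤ infDist x A + infDist x B := by
  by_contra h; push_neg at h
  set η := (ε₀ - (infDist x A + infDist x B))/2 with hη
  have hηpos : 0 < η := by rw [hη]; linarith
  obtain ⟨a, haA, hax⟩ := (infDist_lt_iff hA).1 (lt_add_of_pos_right _ hηpos)
  obtain ⟨b, hbB, hbx⟩ := (infDist_lt_iff hB).1 (lt_add_of_pos_right _ hηpos)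
  have h1 := hsep a haA b hbB
  have h2 : dist a b ≤ dist a x + dist x b := dist_triangle a x b
  rw [dist_comm a x] at h2
  have : η + η = ε₀ - (infDist x A + infDist x B) := by rw [hη]; ring
  linarith


lemma var_bound {A B : Set X} (hA : A.Nonempty) (hB : B.Nonempty) {ε₀ : ℝ}
    (hε₀ : 0 < ε₀) (hsep : ∀ a ∈ A, ∀ b ∈ B, ε₀ ≤ dist a b) (x y : X) :
    |infDist x A / (infDist x A + infDist x B)
      - infDist y A / (infDist y A + infDist y B)| ≤
      dist x y / (infDist x A + infDist x B) := by
  set u := infDist x A with hu'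
  set v := infDist x B with hv'
  set u' := infDist y A with hu''
  set v' := infDist y B with hv''
  have hu0 : 0 ≤ u := infDist_nonneg
  have hv0 : 0 ≤ v := infDist_nonneg
  have hu'0 : 0 ≤ u' := infDist_nonneg
  have hv'0 : 0 ≤ v' := infDist_nonneg
  have hDx : 0 < u + v := lt_of_lt_of_le hε₀ (den_ge hA hB hsep x)
  have hDy : 0 < u' + v' := lt_of_lt_of_le hε₀ (den_ge hA hB hsep y)
  have hud : |u - u'| ≤ dist x y := by
    have := (lipschitz_infDist_pt A).dist_le_mul x y
    simpa [Real.dist_eq] using this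
  have hvd : |v' - v| ≤ dist x y := by
    have := (lipschitz_infDist_pt B).dist_le_mul x y
    rw [abs_sub_comm]
    simpa [Real.dist_eq] using this
  rw [div_sub_div _ _ hDx.ne' hDy.ne', abs_div, abs_of_pos (mul_pos hDx hDy)]
  have hnum : |u * (u' + v') - (u + v) * u'| ≤ (u' + v') * dist x y := by
    have h1 : u * (u' + v') - (u + v) * u' = v' * (u - u') + u' * (v' - v) := by ring
    calc |u * (u' + v') - (u + v) * u'| = |v' * (u - u') + u' * (v' - v)| := by rw [h1]
      _ ≤ |v' * (u - u')| + |u' * (v' - v)| := abs_add_le _ _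
      _ = v' * |u - u'| + u' * |v' - v| := by
          rw [abs_mul, abs_mul, abs_of_nonneg hv'0, abs_of_nonneg hu'0]
      _ ≤ v' * dist x y + u' * dist x y := by gcongr
      _ = (u' + v') * dist x y := by ring
  rw [div_le_div_iff₀ (mul_pos hDx hDy) hDx]
  nlinarith [hnum, hDx.le, dist_nonneg (x := x) (y := y)]

lemma isHigson_phi {A B : Set X} (hA : A.Nonempty) (hB : B.Nonempty)
    {ε₀ : ℝ} (hε₀ : 0 < ε₀) (hsep : ∀ a ∈ A, ∀ b ∈ B, ε₀ ≤ dist a b)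
    (hnc : ¬ Close A B) {f : X → ℝ} (hc : Continuous f) (hbd : ∃ C, ∀ x, |f x| ≤ C)
    (hform : ∀ x, f x = infDist x A / (infDist x A + infDist x B)) : IsHigson f := by
  refine ⟨hc, hbd, ?_⟩
  intro E hE ε hε
  obtain ⟨CE, hCE⟩ := hE
  set C := max CE 0 with hC
  have hC0 : 0 ≤ C := le_max_right _ _
  set M := C/ε + 1 with hM'
  have hM : 0 < M := by positivity
  have hCM : C / M < ε := by
    rw [div_lt_iff₀ hM]
    have h1 : ε * (C/ε) = C := mul_div_cancel₀ _ hε.ne'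
    have h2 : ε * M = C + ε := by rw [hM', mul_add, h1, mul_one]
    linarith
  refine ⟨{x | infDist x A + infDist x B ≤ M}, ?_, ?_⟩
  · by_contra hub
    obtain ⟨u, hu, huub⟩ := exists_seq_of_unbounded hub
    have hxa : ∀ n, ∃ a ∈ A, dist (u n) a < M + 1 := fun n =>
      (infDist_lt_iff hA).1 (lt_of_le_of_lt
        (le_trans (le_add_of_nonneg_right infDist_nonneg) (hu n)) (lt_add_one M))
    have hxb : ∀ n, ∃ b ∈ B, dist (u n) b < M + 1 := fun n =>
      (infDist_lt_iff hB).1 (lt_of_le_of_lt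
        (le_trans (le_add_of_nonneg_left infDist_nonneg) (hu n)) (lt_add_one M))
    choose a haA hax using hxa
    choose b hbB hbx using hxb
    apply hnc
    refine ⟨2*(M+1), by positivity, a, b, haA, hbB, fun n => ?_, fun hbnd => ?_⟩
    · have h2 : dist (a n) (b n) ≤ dist (a n) (u n) + dist (u n) (b n) := dist_triangle _ _ _
      rw [dist_comm (a n) (u n)] at h2
      linarith [hax n, hbx n]
    · obtain ⟨r, hr⟩ := (isBounded_iff_subset_closedBall (a 0)).1 hbnd
      apply huub
      refine (isBounded_iff_subset_closedBall (a 0)).2 ⟨r + (M+1), ?_⟩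
      rintro _ ⟨n, rfl⟩
      have h3 := hr (Set.mem_range_self n)
      rw [mem_closedBall] at h3 ⊢
      have h4 : dist (u n) (a 0) ≤ dist (u n) (a n) + dist (a n) (a 0) := dist_triangle _ _ _
      linarith [hax n]
  · rintro ⟨x, y⟩ hpE hxy
    have hd : dist x y ≤ C := le_trans (hCE _ hpE) (le_max_left _ _)
    rw [hform x, hform y]
    rcases hxy with hx | hy
    · have hDx : M < infDist x A + infDist x B := lt_of_not_ge hx
      calc |infDist x A / (infDist x A + infDist x B)
            - infDist y A / (infDist y A + infDist y B)|
          ≤ dist x y / (infDist x A + infDist x B) := var_bound hA hB hε₀ hsep x y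
        _ ≤ C / M := div_le_div₀ hC0 hd hM hDx.le
        _ < ε := hCM
    · have hDy : M < infDist y A + infDist y B := lt_of_not_ge hy
      rw [abs_sub_comm]
      calc |infDist y A / (infDist y A + infDist y B)
            - infDist x A / (infDist x A + infDist x B)|
          ≤ dist y x / (infDist y A + infDist y B) := var_bound hA hB hε₀ hsep y x
        _ ≤ C / M := div_le_div₀ hC0 (by rwa [dist_comm]) hM hDy.le
        _ < ε := hCM

lemma isHigson_const (c : ℝ) : IsHigson (fun _ : X => c) :=
  ⟨continuous_const, ⟨|c|, fun _ => le_refl _⟩,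
    fun _ _ ε hε => ⟨∅, Bornology.isBounded_empty, fun _ _ _ => by simpa using hε⟩⟩

lemma IsHigson.add {f g : X → ℝ} (hf : IsHigson f) (hg : IsHigson g) : IsHigson (f + g) := by
  obtain ⟨hfc, ⟨Cf, hCf⟩, hfv⟩ := hf
  obtain ⟨hgc, ⟨Cg, hCg⟩, hgv⟩ := hg
  refine ⟨hfc.add hgc, ⟨Cf + Cg, fun x =>
    (abs_add_le _ _).trans (add_le_add (hCf x) (hCg x))⟩, ?_⟩
  intro E hE ε hε
  obtain ⟨Bf, hBf, hf'⟩ := hfv E hE (ε/2) (by linarith)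
  obtain ⟨Bg, hBg, hg'⟩ := hgv E hE (ε/2) (by linarith)
  refine ⟨Bf ∪ Bg, hBf.union hBg, fun p hp hout => ?_⟩
  have hof : p.1 ∉ Bf ∨ p.2 ∉ Bf := by
    rcases hout with h | h
    · exact Or.inl fun hh => h (Set.mem_union_left _ hh)
    · exact Or.inr fun hh => h (Set.mem_union_left _ hh)
  have hog : p.1 ∉ Bg ∨ p.2 ∉ Bg := by
    rcases hout with h | h
    · exact Or.inl fun hh => h (Set.mem_union_right _ hh)
    · exact Or.inr fun hh => h (Set.mem_union_right _ hh)
  have h1 := hf' p hp hof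
  have h2 := hg' p hp hog
  have he : (f+g) p.1 - (f+g) p.2 = (f p.1 - f p.2) + (g p.1 - g p.2) := by
    simp only [Pi.add_apply]; ring
  calc |(f+g) p.1 - (f+g) p.2| ≤ |f p.1 - f p.2| + |g p.1 - g p.2| := by
        rw [he]; exact abs_add_le _ _
    _ < ε := by linarith

lemma IsHigson.mul {f g : X → ℝ} (hf : IsHigson f) (hg : IsHigson g) : IsHigson (f * g) := by
  obtain ⟨hfc, ⟨Cf, hCf⟩, hfv⟩ := hf
  obtain ⟨hgc, ⟨Cg, hCg⟩, hgv⟩ := hg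
  set Cf' := max Cf 0 with hCf'd
  set Cg' := max Cg 0 with hCg'd
  have hCf' : ∀ x, |f x| ≤ Cf' := fun x => (hCf x).trans (le_max_left _ _)
  have hCg' : ∀ x, |g x| ≤ Cg' := fun x => (hCg x).trans (le_max_left _ _)
  have hCf0 : 0 ≤ Cf' := le_max_right _ _
  have hCg0 : 0 ≤ Cg' := le_max_right _ _
  refine ⟨hfc.mul hgc, ⟨Cf' * Cg', fun x => by
    rw [Pi.mul_apply, abs_mul]
    exact mul_le_mul (hCf' x) (hCg' x) (abs_nonneg _) hCf0⟩, ?_⟩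
  intro E hE ε hε
  obtain ⟨Bg, hBg, hg'⟩ := hgv E hE (ε/(2*(Cf'+1))) (by positivity)
  obtain ⟨Bf, hBf, hf'⟩ := hfv E hE (ε/(2*(Cg'+1))) (by positivity)
  refine ⟨Bf ∪ Bg, hBf.union hBg, fun p hp hout => ?_⟩
  have hof : p.1 ∉ Bf ∨ p.2 ∉ Bf := by
    rcases hout with h | h
    · exact Or.inl fun hh => h (Set.mem_union_left _ hh)
    · exact Or.inr fun hh => h (Set.mem_union_left _ hh)
  have hog : p.1 ∉ Bg ∨ p.2 ∉ Bg := by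
    rcases hout with h | h
    · exact Or.inl fun hh => h (Set.mem_union_right _ hh)
    · exact Or.inr fun hh => h (Set.mem_union_right _ hh)
  have h1 := hf' p hp hof
  have h2 := hg' p hp hog
  have key : (f*g) p.1 - (f*g) p.2
      = f p.1 * (g p.1 - g p.2) + g p.2 * (f p.1 - f p.2) := by
    simp only [Pi.mul_apply]; ring
  have hne1 : Cf' + 1 ≠ 0 := by positivity
  have hne2 : Cg' + 1 ≠ 0 := by positivity
  have e1 : (Cf'+1) * (ε/(2*(Cf'+1))) = ε/2 := by field_simp
  have e2 : (Cg'+1) * (ε/(2*(Cg'+1))) = ε/2 := by field_simp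
  have q1 : 0 < ε/(2*(Cf'+1)) := by positivity
  have q2 : 0 < ε/(2*(Cg'+1)) := by positivity
  calc |(f*g) p.1 - (f*g) p.2|
      = |f p.1 * (g p.1 - g p.2) + g p.2 * (f p.1 - f p.2)| := by rw [key]
    _ ≤ |f p.1| * |g p.1 - g p.2| + |g p.2| * |f p.1 - f p.2| := by
        refine (abs_add_le _ _).trans ?_
        rw [abs_mul, abs_mul]
    _ ≤ Cf' * (ε/(2*(Cf'+1))) + Cg' * (ε/(2*(Cg'+1))) :=
        add_le_add (mul_le_mul (hCf' _) h2.le (abs_nonneg _) hCf0)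
          (mul_le_mul (hCg' _) h1.le (abs_nonneg _) hCg0)
    _ < (Cf'+1) * (ε/(2*(Cf'+1))) + (Cg'+1) * (ε/(2*(Cg'+1))) := by
        gcongr <;> linarith
    _ = ε := by rw [e1, e2]; ring


def higsonAlg (X : Type*) [MetricSpace X] : Subalgebra ℝ (BoundedContinuousFunction X ℝ) where
  carrier := {f | IsHigson ⇑f}
  mul_mem' := fun {f g} hf hg => by
    show IsHigson ⇑(f * g)
    rw [BoundedContinuousFunction.coe_mul]
    exact IsHigson.mul hf hg
  one_mem' := by
    show IsHigson ⇑(1 : BoundedContinuousFunction X ℝ)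
    rw [BoundedContinuousFunction.coe_one]
    exact isHigson_const 1
  add_mem' := fun {f g} hf hg => by
    show IsHigson ⇑(f + g)
    rw [BoundedContinuousFunction.coe_add]
    exact IsHigson.add hf hg
  zero_mem' := by
    show IsHigson ⇑(0 : BoundedContinuousFunction X ℝ)
    rw [BoundedContinuousFunction.coe_zero]
    exact isHigson_const 0
  algebraMap_mem' := fun c => by
    show IsHigson ⇑(algebraMap ℝ (BoundedContinuousFunction X ℝ) c)
    have : ⇑(algebraMap ℝ (BoundedContinuousFunction X ℝ) c) = fun _ => c := by
      ext x; simp [BoundedContinuousFunction.algebraMap_apply]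
    rw [this]
    exact isHigson_const c

lemma isClosed_higson : IsClosed {f : BoundedContinuousFunction X ℝ | IsHigson ⇑f} := by
  apply isClosed_of_closure_subset
  intro f hf
  refine ⟨f.continuous, ⟨‖f‖, fun x => by
    rw [← Real.norm_eq_abs]; exact f.norm_coe_le_norm x⟩, ?_⟩
  intro E hE ε hε
  obtain ⟨g, hgH, hdist⟩ := Metric.mem_closure_iff.1 hf (ε/3) (by linarith)
  obtain ⟨B, hBb, hg⟩ := hgH.2.2 E hE (ε/3) (by linarith)
  refine ⟨B, hBb, fun p hp hout => ?_⟩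
  have hg' := hg p hp hout
  have h1 : |f p.1 - g p.1| ≤ dist f g := by
    rw [← Real.dist_eq]; exact BoundedContinuousFunction.dist_coe_le_dist _
  have h2 : |g p.2 - f p.2| ≤ dist f g := by
    rw [← Real.dist_eq, dist_comm]; exact BoundedContinuousFunction.dist_coe_le_dist _
  calc |f p.1 - f p.2| ≤ |f p.1 - g p.1| + |g p.1 - f p.2| := abs_sub_le _ _ _
    _ ≤ |f p.1 - g p.1| + (|g p.1 - g p.2| + |g p.2 - f p.2|) := by
        linarith [abs_sub_le (g p.1) (g p.2) (f p.2)]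
    _ < ε := by linarith

lemma exists_psi [ProperSpace X] (f : BoundedContinuousFunction X ℝ) (hf : IsHigson ⇑f)
    (S : Subalgebra ℝ (BoundedContinuousFunction X ℝ))
    (hgen : ∀ g : BoundedContinuousFunction X ℝ,
      (∃ A B : Set X, A.Nonempty ∧ B.Nonempty ∧
        (∃ ε > (0:ℝ), ∀ a ∈ A, ∀ b ∈ B, ε ≤ dist a b) ∧ ¬ Close A B ∧
        ∀ x : X, g x = infDist x A / (infDist x A + infDist x B)) → g ∈ S)
    (s : ℝ) {δ : ℝ} (hδ : 0 < δ) :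
    ∃ ψ : BoundedContinuousFunction X ℝ, ψ ∈ S ∧ (∀ x, 0 ≤ ψ x) ∧ (∀ x, ψ x ≤ 1) ∧
      (∀ x, f x ≤ s → ψ x = 0) ∧ (∀ x, s + δ ≤ f x → ψ x = 1) := by
  set A := {x | f x ≤ s} with hAdef
  set B := {x | s + δ ≤ f x} with hBdef
  by_cases hBne : B.Nonempty
  · by_cases hAne : A.Nonempty
    · have hnc : ¬ Close A B := notClose_of_higson hf hδ
      have hAc : IsClosed A := isClosed_le f.continuous continuous_const
      have hBc : IsClosed B := isClosed_le continuous_const f.continuous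
      have hdis : Disjoint A B := by
        rw [Set.disjoint_left]
        intro x hx hx'
        have h1 : f x ≤ s := hx
        have h2 : s + δ ≤ f x := hx'
        linarith
      obtain ⟨ε₀, hε₀, hsep⟩ := exists_pos_dist hAc hBc hdis hnc
      have hden := den_ge hAne hBne hsep
      have hdpos : ∀ x, 0 < infDist x A + infDist x B :=
        fun x => lt_of_lt_of_le hε₀ (hden x)
      set φ : X → ℝ := fun x => infDist x A / (infDist x A + infDist x B) with hφdef
      have hφc : Continuous φ := (continuous_infDist_pt A).div
        ((continuous_infDist_pt A).add (continuous_infDist_pt B)) (fun x => (hdpos x).ne')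
      have hφ0 : ∀ x, 0 ≤ φ x := fun x => div_nonneg infDist_nonneg (hdpos x).le
      have hφ1 : ∀ x, φ x ≤ 1 := fun x =>
        (div_le_one (hdpos x)).2 (le_add_of_nonneg_right infDist_nonneg)
      refine ⟨⟨⟨φ, hφc⟩, ⟨1, fun x y => ?_⟩⟩, ?_, ?_, ?_, ?_, ?_⟩
      · rw [Real.dist_eq, abs_sub_le_iff]
        constructor <;> simp only [ContinuousMap.coe_mk] <;>
          linarith [hφ0 x, hφ1 x, hφ0 y, hφ1 y]
      · exact hgen _ ⟨A, B, hAne, hBne, ⟨ε₀, hε₀, hsep⟩, hnc, fun x => rfl⟩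
      · exact hφ0
      · exact hφ1
      · intro x hx
        show φ x = 0
        rw [hφdef]
        simp only
        rw [infDist_zero_of_mem (show x ∈ A from hx), zero_div]
      · intro x hx
        show φ x = 1
        have hB0 : infDist x B = 0 := infDist_zero_of_mem (show x ∈ B from hx)
        have hApos : ε₀ ≤ infDist x A := by have := hden x; rw [hB0] at this; linarith
        rw [hφdef]
        simp only
        rw [hB0, add_zero, div_self (by linarith : infDist x A ≠ 0)]
    · refine ⟨1, S.one_mem, ?_, ?_, ?_, ?_⟩
      · intro x; simp
      · intro x; simp
      · intro x hx; exact absurd ⟨x, hx⟩ hAne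
      · intro x _; simp
  · refine ⟨0, S.zero_mem, ?_, ?_, ?_, ?_⟩
    · intro x; simp
    · intro x; simp
    · intro x _; simp
    · intro x hx; exact absurd ⟨x, hx⟩ hBne


lemma approx [ProperSpace X] (f : BoundedContinuousFunction X ℝ) (hf : IsHigson ⇑f)
    (S : Subalgebra ℝ (BoundedContinuousFunction X ℝ))
    (hgen : ∀ g : BoundedContinuousFunction X ℝ,
      (∃ A B : Set X, A.Nonempty ∧ B.Nonempty ∧
        (∃ ε > (0:ℝ), ∀ a ∈ A, ∀ b ∈ B, ε ≤ dist a b) ∧ ¬ Close A B ∧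
        ∀ x : X, g x = infDist x A / (infDist x A + infDist x B)) → g ∈ S)
    {δ : ℝ} (hδ : 0 < δ) :
    ∃ g ∈ S, ∀ x, |f x - g x| ≤ δ := by
  classical
  set C := ‖f‖ with hCdef
  have hC0 : 0 ≤ C := norm_nonneg f
  have hfx : ∀ x, |f x| ≤ C := fun x => by
    rw [← Real.norm_eq_abs]; exact f.norm_coe_le_norm x
  set t : ℕ → ℝ := fun k => -C + k * δ with ht
  set N := ⌈2*C/δ⌉₊ with hN
  have htN : C ≤ t N := by
    have h1 : 2*C/δ ≤ (N:ℝ) := Nat.le_ceil _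
    rw [div_le_iff₀ hδ] at h1
    simp only [ht]
    linarith
  have hstep : ∀ k : ℕ, t k + δ = t (k+1) := by
    intro k; simp only [ht]; push_cast; ring
  have hmono : ∀ j k : ℕ, j ≤ k → t j ≤ t k := by
    intro j k h
    simp only [ht]
    have h2 : (j:ℝ) ≤ k := Nat.cast_le.2 h
    nlinarith
  have key : ∀ k : ℕ, ∃ ψ : BoundedContinuousFunction X ℝ, ψ ∈ S ∧
      (∀ x, 0 ≤ ψ x) ∧ (∀ x, ψ x ≤ 1) ∧
      (∀ x, f x ≤ t k → ψ x = 0) ∧ (∀ x, t k + δ ≤ f x → ψ x = 1) :=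
    fun k => exists_psi f hf S hgen (t k) hδ
  choose ψ hmem hψ0 hψ1b h0 h1 using key
  refine ⟨t 0 • (1 : BoundedContinuousFunction X ℝ) + ∑ k ∈ Finset.range N, δ • ψ k,
    S.add_mem (S.smul_mem S.one_mem _) (S.sum_mem fun k _ => S.smul_mem (hmem k) _), ?_⟩
  intro x
  set j := Nat.findGreatest (fun k => t k ≤ f x) N with hj
  have hP0 : t 0 ≤ f x := by
    have := (abs_le.1 (hfx x)).1
    simp only [ht]
    push_cast; linarith
  have hPj : t j ≤ f x := by
    have h' := Nat.findGreatest_spec (P := fun k => t k ≤ f x) (Nat.zero_le N) hP0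
    simpa [← hj] using h'
  have hjN : j ≤ N := by rw [hj]; exact Nat.findGreatest_le N
  have hfup : f x ≤ t j + δ := by
    rcases lt_or_eq_of_le hjN with h | h
    · have hng : ¬ t (j+1) ≤ f x := by
        have h' := Nat.findGreatest_is_greatest (P := fun k => t k ≤ f x) (k := j+1)
          (n := N) (by rw [← hj]; omega) (by omega)
        simpa using h'
      rw [hstep j]
      linarith [lt_of_not_ge hng]
    · have h2 := (abs_le.1 (hfx x)).2
      rw [← h] at htN
      linarith
  have hlow : (j:ℝ) ≤ ∑ k ∈ Finset.range N, ψ k x := by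
    have h1' : ∀ k ∈ Finset.range j, ψ k x = 1 := by
      intro k hk
      rw [Finset.mem_range] at hk
      exact h1 k x (by rw [hstep k]; exact le_trans (hmono (k+1) j hk) hPj)
    calc (j:ℝ) = ∑ _k ∈ Finset.range j, (1:ℝ) := by simp
      _ = ∑ k ∈ Finset.range j, ψ k x := (Finset.sum_congr rfl h1').symm
      _ ≤ ∑ k ∈ Finset.range N, ψ k x :=
          Finset.sum_le_sum_of_subset_of_nonneg (Finset.range_subset_range.2 hjN)
            (fun k _ _ => hψ0 k x)
  have hhigh : ∑ k ∈ Finset.range N, ψ k x ≤ (j:ℝ) + 1 := by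
    rcases le_or_gt N (j+1) with h | h
    · calc ∑ k ∈ Finset.range N, ψ k x ≤ ∑ _k ∈ Finset.range N, (1:ℝ) :=
            Finset.sum_le_sum (fun k _ => hψ1b k x)
        _ = N := by simp
        _ ≤ (j:ℝ)+1 := by exact_mod_cast h
    · have hsplit := Finset.sum_range_add_sum_Ico (fun k => ψ k x) h.le
      have hz : ∀ k ∈ Finset.Ico (j+1) N, ψ k x = 0 := by
        intro k hk
        rw [Finset.mem_Ico] at hk
        have hng : ¬ t k ≤ f x := by
          have h' := Nat.findGreatest_is_greatest (P := fun k => t k ≤ f x) (k := k)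
            (n := N) (by rw [← hj]; omega) (by omega)
          simpa using h'
        exact h0 k x (le_of_lt (lt_of_not_ge hng))
      have hb1 : ∑ k ∈ Finset.range (j+1), ψ k x ≤ (j:ℝ) + 1 := by
        calc ∑ k ∈ Finset.range (j+1), ψ k x ≤ ∑ _k ∈ Finset.range (j+1), (1:ℝ) :=
              Finset.sum_le_sum (fun k _ => hψ1b k x)
          _ = (j:ℝ) + 1 := by
              rw [Finset.sum_const, Finset.card_range, nsmul_eq_mul, mul_one]
              push_cast; ring
      calc ∑ k ∈ Finset.range N, ψ k x
          = ∑ k ∈ Finset.range (j+1), ψ k x + ∑ k ∈ Finset.Ico (j+1) N, ψ k x :=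
            hsplit.symm
        _ = ∑ k ∈ Finset.range (j+1), ψ k x + 0 := by rw [Finset.sum_eq_zero hz]
        _ ≤ (j:ℝ) + 1 := by rw [add_zero]; exact hb1
  have hgx : (t 0 • (1 : BoundedContinuousFunction X ℝ) + ∑ k ∈ Finset.range N, δ • ψ k) x
      = t 0 + δ * ∑ k ∈ Finset.range N, ψ k x := by
    simp only [BoundedContinuousFunction.coe_add, Pi.add_apply,
      BoundedContinuousFunction.coe_smul, Pi.smul_apply,
      BoundedContinuousFunction.coe_one, Pi.one_apply, smul_eq_mul, mul_one,
      BoundedContinuousFunction.coe_sum, Finset.sum_apply]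
    rw [Finset.mul_sum]
  rw [hgx]
  have m1 : δ * (j:ℝ) ≤ δ * ∑ k ∈ Finset.range N, ψ k x :=
    mul_le_mul_of_nonneg_left hlow hδ.le
  have m2 : δ * ∑ k ∈ Finset.range N, ψ k x ≤ δ * ((j:ℝ) + 1) :=
    mul_le_mul_of_nonneg_left hhigh hδ.le
  have e1 : t 0 + δ * (j:ℝ) = t j := by simp only [ht]; push_cast; ring
  rw [abs_sub_le_iff]
  constructor <;> nlinarith [hPj, hfup, m1, m2, e1]

end HigsonAux


/-- the closure of the subalgebra of bounded continuous functions generated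
by `1` and the functions `φ_{A,B}` is exactly the set of Higson functions. -/
theorem closure_adjoin_phiAB_eq_higson {X : Type*} [MetricSpace X] [ProperSpace X] :
    closure ((Algebra.adjoin ℝ
        (insert (1 : BoundedContinuousFunction X ℝ)
          {f : BoundedContinuousFunction X ℝ | ∃ A B : Set X, A.Nonempty ∧ B.Nonempty ∧
            (∃ ε > (0:ℝ), ∀ a ∈ A, ∀ b ∈ B, ε ≤ dist a b) ∧ ¬ Close A B ∧
            ∀ x : X, f x =
              Metric.infDist x A / (Metric.infDist x A + Metric.infDist x B)}) :
        Subalgebra ℝ (BoundedContinuousFunction X ℝ)) : Set (BoundedContinuousFunction X ℝ))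
      = {f : BoundedContinuousFunction X ℝ | IsHigson ⇑f} := by
  classical
  apply Set.Subset.antisymm
  · have hle : (Algebra.adjoin ℝ
        (insert (1 : BoundedContinuousFunction X ℝ)
          {f : BoundedContinuousFunction X ℝ | ∃ A B : Set X, A.Nonempty ∧ B.Nonempty ∧
            (∃ ε > (0:ℝ), ∀ a ∈ A, ∀ b ∈ B, ε ≤ dist a b) ∧ ¬ Close A B ∧
            ∀ x : X, f x =
              Metric.infDist x A / (Metric.infDist x A + Metric.infDist x B)}) :
        Subalgebra ℝ (BoundedContinuousFunction X ℝ)) ≤ HigsonAux.higsonAlg X := by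
      apply Algebra.adjoin_le
      intro f hfm
      rcases Set.mem_insert_iff.1 hfm with rfl | ⟨A, B, hA, hB, ⟨ε₀, hε₀, hsep⟩, hnc, hform⟩
      · exact (HigsonAux.higsonAlg X).one_mem
      · show IsHigson ⇑f
        exact HigsonAux.isHigson_phi hA hB hε₀ hsep hnc f.continuous
          ⟨‖f‖, fun x => by rw [← Real.norm_eq_abs]; exact f.norm_coe_le_norm x⟩ hform
    exact closure_minimal (fun f hf => hle hf) HigsonAux.isClosed_higson
  · intro f hf
    rw [Metric.mem_closure_iff]
    intro ε hε
    obtain ⟨g, hg, hb⟩ := HigsonAux.approx f hf _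
      (fun g hprop => Algebra.subset_adjoin (Set.mem_insert_of_mem _ hprop))
      (δ := ε/2) (by linarith)
    exact ⟨g, hg, lt_of_le_of_lt ((BoundedContinuousFunction.dist_le (C := ε/2) (by linarith)).2
      fun x => by rw [Real.dist_eq]; exact hb x) (by linarith)⟩
end

section
/- Let X be a metric space and let U₁, …, Uₙ ⊆ X coarsely cover X. Let φ : X → ℝ be a bounded continuous function such that for each i the restriction φ|_{Uᵢ} is a Higson function on the metric subspace Uᵢ (i.e. for every R ≥ 0 and ε > 0 there is a bounded set B ⊆ X such that for all x, y ∈ Uᵢ with d(x,y) ≤ R and x ∉ B, |φ(x) − φ(y)| < ε). Then φ is a Higson function on X. -/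
open Topology

/-- if `U₁, …, Uₙ` coarsely cover `X` and a bounded continuous `φ` is
Higson on each `Uᵢ`, then `φ` is Higson on `X`. -/
theorem higson_of_coarse_cover {X : Type*} [MetricSpace X]
    (n : ℕ) (U : Fin n → Set X)
    (hcover : ∀ E : Set (X × X), IsEntourage E →
      Bornology.IsBounded (⋂ i : Fin n, EImage E (U i)ᶜ))
    (φ : X → ℝ) (hφc : Continuous φ) (hφb : ∃ C : ℝ, ∀ x, |φ x| ≤ C)
    (hloc : ∀ i : Fin n, ∀ R ≥ (0:ℝ), ∀ ε > (0:ℝ), ∃ B : Set X,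
      Bornology.IsBounded B ∧
      ∀ x ∈ U i, ∀ y ∈ U i, dist x y ≤ R → x ∉ B → |φ x - φ y| < ε) :
    IsHigson φ := by
  refine ⟨hφc, hφb, ?_⟩
  intro E hE ε hε
  obtain ⟨C, hC⟩ := hE
  set R : ℝ := max C 0 with hRdef
  have hR0 : (0:ℝ) ≤ R := le_max_right _ _
  set E' : Set (X × X) := {p | dist p.1 p.2 ≤ R} with hE'def
  have hE' : IsEntourage E' := ⟨R, fun p hp => hp⟩
  have hS := hcover E' hE'
  choose B hBb hB using fun i => hloc i R hR0 ε hε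
  have hUb : Bornology.IsBounded (⋃ i, B i) := by
    exact Bornology.isBounded_iUnion.mpr hBb
  refine ⟨(⋂ i, EImage E' (U i)ᶜ) ∪ ⋃ i, B i, hS.union hUb, ?_⟩
  intro p hp hout
  have hdist : dist p.1 p.2 ≤ R := le_trans (hC p hp) (le_max_left _ _)
  rcases hout with h1 | h2
  · have h1' : p.1 ∉ ⋂ i, EImage E' (U i)ᶜ := fun h => h1 (Or.inl h)
    rw [Set.mem_iInter] at h1'
    push_neg at h1'
    obtain ⟨i, hi⟩ := h1'
    have hall : ∀ y : X, dist p.1 y ≤ R → y ∈ U i := by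
      intro y hy
      by_contra hyU
      exact hi ⟨y, hyU, hy⟩
    have hx : p.1 ∈ U i := hall p.1 (by simp [hR0])
    have hy : p.2 ∈ U i := hall p.2 hdist
    have hxB : p.1 ∉ B i := fun h => h1 (Or.inr (Set.mem_iUnion.mpr ⟨i, h⟩))
    exact hB i p.1 hx p.2 hy hdist hxB
  · have h2' : p.2 ∉ ⋂ i, EImage E' (U i)ᶜ := fun h => h2 (Or.inl h)
    rw [Set.mem_iInter] at h2'
    push_neg at h2'
    obtain ⟨i, hi⟩ := h2'
    have hall : ∀ y : X, dist p.2 y ≤ R → y ∈ U i := by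
      intro y hy
      by_contra hyU
      exact hi ⟨y, hyU, hy⟩
    have hx : p.2 ∈ U i := hall p.2 (by simp [hR0])
    have hy : p.1 ∈ U i := hall p.1 (by rwa [dist_comm])
    have hxB : p.2 ∉ B i := fun h => h2 (Or.inr (Set.mem_iUnion.mpr ⟨i, h⟩))
    rw [abs_sub_comm]
    exact hB i p.2 hx p.1 hy (by rwa [dist_comm]) hxB
end

section
/- Let α : X → Y be a coarse map between metric spaces and let r be a large-scale proximity relation on Y. Define a relation r' on subsets of X by: A r' B iff α(A) r α(B). Then r' is a large-scale proximity relation on X. -/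
open Topology

/-- pulling back a large-scale proximity relation along a coarse map
yields a large-scale proximity relation. -/
theorem lsp_pullback_coarseMap {X Y : Type*} [MetricSpace X] [MetricSpace Y]
    (α : X → Y) (hα : IsCoarseMap α)
    (r : Set Y → Set Y → Prop) (hr : IsLSP r) :
    IsLSP (fun A B : Set X => r (α '' A) (α '' B)) := by
  obtain ⟨hu, hp⟩ := hα
  -- monotonicity of r in the first argument
  have mono : ∀ A A' B : Set Y, r A B → A ⊆ A' → r A' B := by
    intro A A' B h hsub
    have := (hr.union_iff A A' B).mpr (Or.inl h)
    rwa [Set.union_eq_self_of_subset_left hsub] at this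
  -- bounded sets map to bounded sets
  have himg : ∀ B : Set X, Bornology.IsBounded B → Bornology.IsBounded (α '' B) := by
    intro B hB
    have hE : IsEntourage (B ×ˢ B) := by
      rcases Metric.isBounded_iff.mp hB with ⟨C, hC⟩
      exact ⟨C, fun p hp => hC hp.1 hp.2⟩
    rcases hu _ hE with ⟨C, hC⟩
    rw [Metric.isBounded_iff]
    refine ⟨C, ?_⟩
    rintro _ ⟨x, hx, rfl⟩ _ ⟨y, hy, rfl⟩
    exact hC (α x, α y) ⟨(x, y), ⟨hx, hy⟩, rfl⟩
  constructor
  · intro B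
    constructor
    · intro h
      have hb : Bornology.IsBounded (α '' B) := (hr.not_self_iff_bounded _).mp h
      exact (hp _ hb).subset (Set.subset_preimage_image α B)
    · intro h
      exact (hr.not_self_iff_bounded _).mpr (himg B h)
  · intro A B h
    exact hr.symm _ _ h
  · intro A A' E hE hA' hA B h
    have hE' : IsEntourage ((fun p : X × X => (α p.1, α p.2)) '' E) := hu E hE
    refine hr.entourage_invariant (α '' A) (α '' A') _ hE' ?_ ?_ (α '' B) h
    · rintro _ ⟨x, hx, rfl⟩
      rcases hA' hx with ⟨y, hy, hxy⟩
      exact ⟨α y, ⟨y, hy, rfl⟩, ⟨(x, y), hxy, rfl⟩⟩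
    · rintro _ ⟨x, hx, rfl⟩
      rcases hA hx with ⟨y, hy, hxy⟩
      exact ⟨α y, ⟨y, hy, rfl⟩, ⟨(x, y), hxy, rfl⟩⟩
  · intro A B C
    simp only [Set.image_union]
    exact hr.union_iff _ _ _
  · intro A B h
    rcases hr.separation _ _ h with ⟨C, D, hCD, hCA, hDB⟩
    refine ⟨α ⁻¹' C, α ⁻¹' D, ?_, ?_, ?_⟩
    · rw [← Set.preimage_union, hCD, Set.preimage_univ]
    · intro hc
      exact hCA (mono _ _ _ hc (Set.image_preimage_subset α C))
    · intro hd
      exact hDB (mono _ _ _ hd (Set.image_preimage_subset α D))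
end

section
/- Let X be a metric space, r a large-scale proximity relation on X, and A ⊆ X a subset regarded as a metric subspace. Define the restricted relation r|_A on subsets of A by: S r|_A T iff S r T (as subsets of X). Then r|_A is a large-scale proximity relation on the metric space A. -/
open Topology

lemma IsLSP.mono_left {X : Type*} [MetricSpace X] {r : Set X → Set X → Prop}
    (hr : IsLSP r) {C₀ C S : Set X} (h : C₀ ⊆ C) (hrC : r C₀ S) : r C S := by
  have := (hr.union_iff C₀ C S).2 (Or.inl hrC)
  rwa [Set.union_eq_self_of_subset_left h] at this

lemma isBounded_image_val_iff {X : Type*} [MetricSpace X] {A : Set X} (B : Set A) :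
    Bornology.IsBounded (Subtype.val '' B) ↔ Bornology.IsBounded B := by
  rw [Metric.isBounded_iff, Metric.isBounded_iff]
  constructor
  · rintro ⟨C, hC⟩
    refine ⟨C, fun x hx y hy => ?_⟩
    rw [Subtype.dist_eq]
    exact hC (Set.mem_image_of_mem _ hx) (Set.mem_image_of_mem _ hy)
  · rintro ⟨C, hC⟩
    refine ⟨C, ?_⟩
    rintro x ⟨x', hx', rfl⟩ y ⟨y', hy', rfl⟩
    rw [← Subtype.dist_eq]
    exact hC hx' hy'

/-- the restriction of a large-scale proximity relation to a metric
subspace is a large-scale proximity relation. -/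
theorem lsp_restrict {X : Type*} [MetricSpace X]
    (r : Set X → Set X → Prop) (hr : IsLSP r) (A : Set X) :
    IsLSP (fun S T : Set A => r (Subtype.val '' S) (Subtype.val '' T)) := by
  constructor
  · intro B
    rw [hr.not_self_iff_bounded, isBounded_image_val_iff]
  · intro S T h
    exact hr.symm _ _ h
  · intro S S' E hE hS'sub hSsub T h
    refine hr.entourage_invariant (Subtype.val '' S) (Subtype.val '' S')
      ((fun p : A × A => ((p.1 : X), (p.2 : X))) '' E) ?_ ?_ ?_ _ h
    · obtain ⟨C, hC⟩ := hE
      refine ⟨C, ?_⟩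
      rintro p ⟨q, hq, rfl⟩
      simpa [← Subtype.dist_eq] using hC q hq
    · rintro x ⟨x', hx', rfl⟩
      obtain ⟨y, hy, hxy⟩ := hS'sub hx'
      exact ⟨y, Set.mem_image_of_mem _ hy, ⟨(x', y), hxy, rfl⟩⟩
    · rintro x ⟨x', hx', rfl⟩
      obtain ⟨y, hy, hxy⟩ := hSsub hx'
      exact ⟨y, Set.mem_image_of_mem _ hy, ⟨(x', y), hxy, rfl⟩⟩
  · intro S T U
    rw [Set.image_union]
    exact hr.union_iff _ _ _
  · intro S T h
    obtain ⟨C, D, hCD, hCS, hDT⟩ := hr.separation _ _ h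
    refine ⟨Subtype.val ⁻¹' C, Subtype.val ⁻¹' D, ?_, ?_, ?_⟩
    · ext x
      simp only [Set.mem_union, Set.mem_preimage, Set.mem_univ, iff_true]
      have : (x : X) ∈ C ∪ D := hCD ▸ Set.mem_univ _
      exact this
    · intro hc
      exact hCS (hr.mono_left (Set.image_preimage_subset _ _) hc)
    · intro hc
      exact hDT (hr.mono_left (Set.image_preimage_subset _ _) hc)
end

section
/- Let X be a proper geodesic metric space. Then (a) X is rim-compact: every point of X has a neighborhood basis of open sets whose topological boundary is compact; and (b) for all subsets A, B ⊆ X, the following are equivalent: (i) there is NO compact set K ⊆ X together with disjoint open sets G, H ⊆ X such that X ∖ K = G ∪ H, closure(A) ⊆ G and closure(B) ⊆ H; (ii) closure(A) ∩ closure(B) ≠ ∅ (closures in X), or A ≍_f B. -/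
open Topology

private lemma aux_unbounded_seq {X : Type*} [MetricSpace X] {S : Set X}
    (hS : ¬ Bornology.IsBounded S) (c : X) :
    ∃ a : ℕ → X, (∀ n, a n ∈ S) ∧ ¬ Bornology.IsBounded (Set.range a) := by
  have h : ∀ n : ℕ, ∃ x, x ∈ S ∧ ¬ dist x c ≤ n := by
    intro n
    by_contra hh
    push_neg at hh
    exact hS ((Metric.isBounded_iff_subset_closedBall c).2 ⟨n, fun x hx => hh x hx⟩)
  choose a haS ha using h
  refine ⟨a, haS, fun hb => ?_⟩
  obtain ⟨r, hr⟩ := (Metric.isBounded_iff_subset_closedBall c).1 hb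
  obtain ⟨n, hn⟩ := exists_nat_gt r
  exact ha n ((hr (Set.mem_range_self n)).trans hn.le)

private lemma aux_transfer {X : Type*} [MetricSpace X] {a b : ℕ → X} {R : ℝ}
    (hd : ∀ n, dist (a n) (b n) ≤ R) (hb : Bornology.IsBounded (Set.range a)) :
    Bornology.IsBounded (Set.range b) := by
  obtain ⟨r, hr⟩ := (Metric.isBounded_iff_subset_closedBall (a 0)).1 hb
  refine (Metric.isBounded_iff_subset_closedBall (a 0)).2 ⟨R + r, ?_⟩
  rintro x ⟨n, rfl⟩
  have h1 : dist (a n) (a 0) ≤ r := hr (Set.mem_range_self n)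
  have h2 := dist_triangle (b n) (a n) (a 0)
  have h3 : dist (b n) (a n) ≤ R := by rw [dist_comm]; exact hd n
  simp only [Metric.mem_closedBall]
  calc dist (b n) (a 0) ≤ dist (b n) (a n) + dist (a n) (a 0) := h2
    _ ≤ R + r := add_le_add h3 h1

private lemma aux_bdd_left {X : Type*} [MetricSpace X] {A' B' : Set X}
    (hnc : ¬ Close A' B') {R : ℝ} (hR : 0 ≤ R) :
    Bornology.IsBounded {x | x ∈ A' ∧ ∃ b ∈ B', dist x b ≤ R} := by
  by_contra hS
  obtain ⟨c, -⟩ : Set.Nonempty {x | x ∈ A' ∧ ∃ b ∈ B', dist x b ≤ R} :=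
    Set.nonempty_iff_ne_empty.2 fun h => hS (h ▸ Bornology.isBounded_empty)
  obtain ⟨a, haS, hub⟩ := aux_unbounded_seq hS c
  choose b hbB hdist using fun n => (haS n).2
  exact hnc ⟨R, hR, a, b, fun n => (haS n).1, hbB, hdist, hub⟩

private lemma aux_bdd_right {X : Type*} [MetricSpace X] {A' B' : Set X}
    (hnc : ¬ Close A' B') {R : ℝ} (hR : 0 ≤ R) :
    Bornology.IsBounded {x | x ∈ B' ∧ ∃ a ∈ A', dist a x ≤ R} := by
  by_contra hS
  obtain ⟨c, -⟩ : Set.Nonempty {x | x ∈ B' ∧ ∃ a ∈ A', dist a x ≤ R} :=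
    Set.nonempty_iff_ne_empty.2 fun h => hS (h ▸ Bornology.isBounded_empty)
  obtain ⟨b, hbS, hub⟩ := aux_unbounded_seq hS c
  choose a haA hdist using fun n => (hbS n).2
  have hub' : ¬ Bornology.IsBounded (Set.range a) := fun h => hub (aux_transfer hdist h)
  exact hnc ⟨R, hR, a, b, haA, fun n => (hbS n).1, hdist, hub'⟩

private lemma aux_eps {X : Type*} [MetricSpace X] [ProperSpace X] {A B A' B' : Set X}
    (hAA : A ⊆ A') (hBB : B ⊆ B') (hnc : ¬ Close A' B')
    (hdisj : closure A ∩ closure B = ∅) :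
    ∃ ε > (0:ℝ), ∀ a ∈ A, ∀ b ∈ B, ε ≤ dist a b := by
  by_contra h
  push_neg at h
  have h' : ∀ n : ℕ, ∃ a, a ∈ A ∧ ∃ b, b ∈ B ∧ dist a b < 1 / (n + 1) := by
    intro n
    obtain ⟨a, ha, b, hb, hab⟩ := h (1 / (n + 1)) (by positivity)
    exact ⟨a, ha, b, hb, hab⟩
  choose a haA b hbB hd using h'
  by_cases hb : Bornology.IsBounded (Set.range a)
  · obtain ⟨x, -, φ, hφ, hlim⟩ := tendsto_subseq_of_bounded hb (fun n => Set.mem_range_self n)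
    have hxA : x ∈ closure A :=
      isClosed_closure.mem_of_tendsto hlim
        (Filter.Eventually.of_forall fun n => subset_closure (haA _))
    have hle : ∀ n, dist ((b ∘ φ) n) ((a ∘ φ) n) ≤ 1 / (n + 1) := by
      intro n
      have h1 : dist (a (φ n)) (b (φ n)) < 1 / (φ n + 1) := hd (φ n)
      have hn : (n : ℝ) ≤ (φ n : ℝ) := Nat.cast_le.2 hφ.le_apply
      have h2 : (1:ℝ) / (φ n + 1) ≤ 1 / (n + 1) :=
        one_div_le_one_div_of_le (by positivity) (by linarith)
      rw [dist_comm]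
      exact h1.le.trans h2
    have hdist0 : Filter.Tendsto (fun n => dist ((b ∘ φ) n) ((a ∘ φ) n))
        Filter.atTop (nhds 0) :=
      squeeze_zero (fun n => dist_nonneg) hle tendsto_one_div_add_atTop_nhds_zero_nat
    have ha0 : Filter.Tendsto (fun n => dist ((a ∘ φ) n) x) Filter.atTop (nhds 0) :=
      tendsto_iff_dist_tendsto_zero.1 hlim
    have hblim : Filter.Tendsto (b ∘ φ) Filter.atTop (nhds x) := by
      rw [tendsto_iff_dist_tendsto_zero]
      refine squeeze_zero (fun n => dist_nonneg)
        (fun n => dist_triangle ((b ∘ φ) n) ((a ∘ φ) n) x) ?_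
      simpa using hdist0.add ha0
    have hxB : x ∈ closure B :=
      isClosed_closure.mem_of_tendsto hblim
        (Filter.Eventually.of_forall fun n => subset_closure (hbB _))
    have : x ∈ (∅ : Set X) := hdisj ▸ Set.mem_inter hxA hxB
    exact this
  · refine hnc ⟨1, zero_le_one, a, b, fun n => hAA (haA n), fun n => hBB (hbB n),
      fun n => ?_, hb⟩
    have h1 : (1:ℝ) ≤ (n:ℝ) + 1 := by
      have : (0:ℝ) ≤ (n:ℝ) := Nat.cast_nonneg n
      linarith
    have h2 : (1:ℝ) / ((n:ℝ) + 1) ≤ 1 := (div_le_one (by positivity)).2 h1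
    exact (hd n).le.trans h2

private lemma aux_construct {X : Type*} [MetricSpace X] [ProperSpace X] {A B : Set X}
    (hdisj : closure A ∩ closure B = ∅)
    (hex : ∃ A' B' : Set X, A ⊆ A' ∧ B ⊆ B' ∧ A' ∪ B' = Set.univ ∧ ¬ Close A' B') :
    ∃ K G H : Set X, IsCompact K ∧ IsOpen G ∧ IsOpen H ∧ Disjoint G H ∧
      Kᶜ = G ∪ H ∧ closure A ⊆ G ∧ closure B ⊆ H := by
  obtain ⟨A', B', hAA, hBB, huniv, hnc⟩ := hex
  rcases Set.eq_empty_or_nonempty A with hA | ⟨x₀, hx₀⟩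
  · refine ⟨∅, ∅, Set.univ, isCompact_empty, isOpen_empty, isOpen_univ,
      Set.disjoint_left.2 (by simp), by simp, by simp [hA], Set.subset_univ _⟩
  rcases Set.eq_empty_or_nonempty B with hB | hBne
  · refine ⟨∅, Set.univ, ∅, isCompact_empty, isOpen_univ, isOpen_empty,
      Set.disjoint_right.2 (by simp), by simp, Set.subset_univ _, by simp [hB]⟩
  obtain ⟨ε, hε, hsep⟩ := aux_eps hAA hBB hnc hdisj
  have hM : Bornology.IsBounded {x | x ∈ A' ∧ ∃ b ∈ B', dist x b ≤ 2 + ε} :=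
    aux_bdd_left hnc (by linarith)
  have hM' : Bornology.IsBounded {x | x ∈ B' ∧ ∃ a ∈ A', dist a x ≤ 2 + ε} :=
    aux_bdd_right hnc (by linarith)
  obtain ⟨r₀, hr₀⟩ := (Metric.isBounded_iff_subset_closedBall x₀).1 (hM.union hM')
  set r : ℝ := r₀ + 2 + ε with hrdef
  set D := Metric.closedBall x₀ r with hD
  set U := Metric.thickening (ε/3) A with hU
  set V := Metric.thickening (ε/3) B with hV
  set P := Metric.thickening 1 (A' \ D) with hP
  set Q := Metric.thickening 1 (B' \ D) with hQ
  have key : ∀ x, x ∈ U ∪ P → x ∉ V ∪ Q := by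
    rintro x (hxU | hxP) (hxV | hxQ)
    · obtain ⟨a, haA, hxa⟩ := Metric.mem_thickening_iff.1 hxU
      obtain ⟨c, hcB, hxc⟩ := Metric.mem_thickening_iff.1 hxV
      have hs := hsep a haA c hcB
      have htri := dist_triangle a x c
      rw [dist_comm a x] at htri
      linarith
    · obtain ⟨a, haA, hxa⟩ := Metric.mem_thickening_iff.1 hxU
      obtain ⟨c, hcBD, hxc⟩ := Metric.mem_thickening_iff.1 hxQ
      have htri := dist_triangle a x c
      rw [dist_comm a x] at htri
      have hacl : dist a c ≤ 2 + ε := by linarith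
      have h1 : dist a x₀ ≤ r₀ :=
        hr₀ (Set.mem_union_left _ ⟨hAA haA, c, hcBD.1, hacl⟩)
      have htri2 := dist_triangle c a x₀
      rw [dist_comm c a] at htri2
      have h2 : dist c x₀ ≤ r := by rw [hrdef]; linarith
      exact hcBD.2 (Metric.mem_closedBall.2 h2)
    · obtain ⟨a, haAD, hxa⟩ := Metric.mem_thickening_iff.1 hxP
      obtain ⟨c, hcB, hxc⟩ := Metric.mem_thickening_iff.1 hxV
      have htri := dist_triangle a x c
      rw [dist_comm a x] at htri
      have hacl : dist a c ≤ 2 + ε := by linarith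
      have h1 : dist c x₀ ≤ r₀ :=
        hr₀ (Set.mem_union_right _ ⟨hBB hcB, a, haAD.1, hacl⟩)
      have htri2 := dist_triangle a c x₀
      have h2 : dist a x₀ ≤ r := by rw [hrdef]; linarith
      exact haAD.2 (Metric.mem_closedBall.2 h2)
    · obtain ⟨a, haAD, hxa⟩ := Metric.mem_thickening_iff.1 hxP
      obtain ⟨c, hcBD, hxc⟩ := Metric.mem_thickening_iff.1 hxQ
      have htri := dist_triangle a x c
      rw [dist_comm a x] at htri
      have hacl : dist a c ≤ 2 + ε := by linarith
      have h1 : dist a x₀ ≤ r₀ :=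
        hr₀ (Set.mem_union_left _ ⟨haAD.1, c, hcBD.1, hacl⟩)
      have h2 : dist a x₀ ≤ r := by rw [hrdef]; linarith
      exact haAD.2 (Metric.mem_closedBall.2 h2)
  have hopenG : IsOpen (U ∪ P) := Metric.isOpen_thickening.union Metric.isOpen_thickening
  have hopenH : IsOpen (V ∪ Q) := Metric.isOpen_thickening.union Metric.isOpen_thickening
  refine ⟨(U ∪ P ∪ (V ∪ Q))ᶜ, U ∪ P, V ∪ Q, ?_, hopenG, hopenH,
    Set.disjoint_left.2 key, compl_compl _, ?_, ?_⟩
  · refine (isCompact_closedBall x₀ r).of_isClosed_subset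
      (isClosed_compl_iff.2 (hopenG.union hopenH)) ?_
    intro x hx
    by_contra hxD
    apply hx
    have hx' : x ∈ A' ∪ B' := huniv ▸ Set.mem_univ x
    rcases hx' with h | h
    · exact Or.inl (Or.inr (Metric.mem_thickening_iff.2
        ⟨x, ⟨h, hxD⟩, by simp [dist_self]⟩))
    · exact Or.inr (Or.inr (Metric.mem_thickening_iff.2
        ⟨x, ⟨h, hxD⟩, by simp [dist_self]⟩))
  · exact fun x hx => Or.inl (Metric.closure_subset_thickening (by positivity) A hx)
  · exact fun x hx => Or.inl (Metric.closure_subset_thickening (by positivity) B hx)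

/-- a proper geodesic metric space is rim-compact, and the Freudenthal
proximity `δ` coincides with "closures meet or `A ≍_f B`". -/
theorem freudenthal_proximity_topological_eq_coarse {X : Type*} [MetricSpace X]
    [ProperSpace X] (hgeo : IsGeodesicSpace X) :
    (∀ x : X, ∀ V ∈ nhds x, ∃ U : Set X, U ⊆ V ∧ IsOpen U ∧ x ∈ U ∧
      IsCompact (frontier U)) ∧
    (∀ A B : Set X,
      (¬ ∃ (K G H : Set X), IsCompact K ∧ IsOpen G ∧ IsOpen H ∧ Disjoint G H ∧
        Kᶜ = G ∪ H ∧ closure A ⊆ G ∧ closure B ⊆ H) ↔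
      ((closure A ∩ closure B).Nonempty ∨ CloseF A B)) := by
  constructor
  · intro x V hV
    obtain ⟨ε, hε, hball⟩ := Metric.mem_nhds_iff.1 hV
    refine ⟨Metric.ball x ε, hball, Metric.isOpen_ball, Metric.mem_ball_self hε, ?_⟩
    exact (isCompact_closedBall x ε).of_isClosed_subset isClosed_frontier
      (frontier_subset_closure.trans Metric.closure_ball_subset_closedBall)
  · intro A B
    constructor
    · intro h
      by_contra hr
      push_neg at hr
      obtain ⟨h1, h2⟩ := hr
      exact h (aux_construct h1 (not_not.mp h2))
    · rintro hr ⟨K, G, H, hK, hG, hH, hGH, hcompl, hA, hB⟩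
      rcases hr with ⟨x, hxA, hxB⟩ | hcf
      · exact Set.disjoint_left.1 hGH (hA hxA) (hB hxB)
      · apply hcf
        refine ⟨G ∪ K, H, (subset_closure.trans hA).trans Set.subset_union_left,
          subset_closure.trans hB, ?_, ?_⟩
        · ext x
          simp only [Set.mem_union, Set.mem_univ, iff_true]
          by_cases hx : x ∈ K
          · exact Or.inl (Or.inr hx)
          · have hx' : x ∈ G ∪ H := hcompl ▸ hx
            rcases hx' with h | h
            · exact Or.inl (Or.inl h)
            · exact Or.inr h
        · rintro ⟨R, hR, a, b, ha, hb, hd, hub⟩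
          have hmem : ∀ n, a n ∈ Metric.cthickening R K := by
            intro n
            rcases ha n with hg | hk
            · obtain ⟨γ, hγ0, hγd, hγ⟩ := hgeo (a n) (b n)
              set d := dist (a n) (b n) with hdd
              have hcont : ContinuousOn γ (Set.Icc 0 d) := by
                refine (LipschitzOnWith.of_dist_le_mul (K := 1) fun s hs t ht => ?_).continuousOn
                rw [hγ s hs t ht, Real.dist_eq]
                simp
              have hpre : IsPreconnected (γ '' Set.Icc 0 d) :=
                isPreconnected_Icc.image γ hcont
              have h0mem : (0:ℝ) ∈ Set.Icc (0:ℝ) d := ⟨le_refl 0, dist_nonneg⟩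
              have hdmem : d ∈ Set.Icc (0:ℝ) d := ⟨dist_nonneg, le_refl d⟩
              by_cases hKint : ∃ t ∈ Set.Icc (0:ℝ) d, γ t ∈ K
              · obtain ⟨t, ht, htK⟩ := hKint
                refine Metric.mem_cthickening_of_dist_le (a n) (γ t) R K htK ?_
                have heq := hγ 0 h0mem t ht
                rw [hγ0] at heq
                rw [heq, zero_sub, abs_neg, abs_of_nonneg ht.1]
                linarith [ht.2, hd n]
              · push_neg at hKint
                have hsub : γ '' Set.Icc 0 d ⊆ G ∪ H := by
                  rintro y ⟨t, ht, rfl⟩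
                  have hy : γ t ∈ Kᶜ := hKint t ht
                  rw [hcompl] at hy
                  exact hy
                have hGne : (γ '' Set.Icc 0 d ∩ G).Nonempty :=
                  ⟨a n, ⟨0, h0mem, hγ0⟩, hg⟩
                have hHne : (γ '' Set.Icc 0 d ∩ H).Nonempty :=
                  ⟨b n, ⟨d, hdmem, hγd⟩, hb n⟩
                obtain ⟨y, -, hyG, hyH⟩ := hpre G H hG hH hsub hGne hHne
                exact absurd hyH (Set.disjoint_left.1 hGH hyG)
            · exact Metric.mem_cthickening_of_dist_le (a n) (a n) R K hk (by simp [hR])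
          exact hub (hK.isBounded.cthickening.subset (Set.range_subset_iff.2 hmem))
end

section
/- Let X be a metric space. The relation ≍_f on subsets of X, defined by A ≍_f B iff there do not exist A' ⊇ A and B' ⊇ B with A' ∪ B' = X and ¬(A' ≍ B'), is a large-scale proximity relation on X. -/
open Topology

section Aux

open Bornology

variable {X : Type*} [MetricSpace X]

lemma bounded_pair {a b : ℕ → X} {R : ℝ}
    (hd : ∀ n, dist (a n) (b n) ≤ R) (hb : IsBounded (Set.range b)) :
    IsBounded (Set.range a) := by
  rw [Metric.isBounded_iff] at hb ⊢
  obtain ⟨C, hC⟩ := hb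
  refine ⟨R + C + R, ?_⟩
  rintro x ⟨m, rfl⟩ y ⟨n, rfl⟩
  have h1 : dist (a m) (a n) ≤ dist (a m) (b m) + dist (b m) (b n) + dist (b n) (a n) :=
    dist_triangle4 _ _ _ _
  have h2 : dist (b m) (b n) ≤ C := hC ⟨m, rfl⟩ ⟨n, rfl⟩
  have h3 : dist (b n) (a n) ≤ R := by rw [dist_comm]; exact hd n
  linarith [hd m]

lemma close_symm {A B : Set X} : Close A B → Close B A := by
  rintro ⟨R, hR, a, b, ha, hb, hd, hub⟩
  exact ⟨R, hR, b, a, hb, ha, fun n => by rw [dist_comm]; exact hd n,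
    fun h => hub (bounded_pair hd h)⟩

lemma close_mono {A A' B B' : Set X} (hA : A ⊆ A') (hB : B ⊆ B') (h : Close A B) :
    Close A' B' := by
  obtain ⟨R, hR, a, b, ha, hb, hd, hub⟩ := h
  exact ⟨R, hR, a, b, fun n => hA (ha n), fun n => hB (hb n), hd, hub⟩

lemma exists_seq_of_unbounded {S : Set X} (h : ¬ IsBounded S) :
    ∃ a : ℕ → X, (∀ n, a n ∈ S) ∧ ¬ IsBounded (Set.range a) := by
  have hne : S.Nonempty := by
    rcases S.eq_empty_or_nonempty with rfl | hs
    · exact absurd Bornology.isBounded_empty h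
    · exact hs
  obtain ⟨x₀, hx₀⟩ := hne
  have key : ∀ n : ℕ, ∃ y ∈ S, (n : ℝ) < dist y x₀ := by
    intro n
    by_contra h'
    push_neg at h'
    exact h ((Metric.isBounded_closedBall (x := x₀) (r := n)).subset
      fun y hy => Metric.mem_closedBall.mpr (h' y hy))
  choose a ha hd using key
  refine ⟨a, ha, fun hb => ?_⟩
  rw [Metric.isBounded_iff] at hb
  obtain ⟨C, hC⟩ := hb
  obtain ⟨n, hn⟩ := exists_nat_gt (C + dist (a 0) x₀)
  have h2 : dist (a n) x₀ ≤ dist (a n) (a 0) + dist (a 0) x₀ := dist_triangle _ _ _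
  have h3 : dist (a n) (a 0) ≤ C := hC ⟨n, rfl⟩ ⟨0, rfl⟩
  have h4 := hd n
  linarith

lemma close_of_unbounded_part {A C : Set X} {R : ℝ} (hR : 0 ≤ R)
    {a b : ℕ → X} (hb : ∀ n, b n ∈ C) (hd : ∀ n, dist (a n) (b n) ≤ R)
    {p : ℕ → Prop} (hp : ∀ n, p n → a n ∈ A)
    (hub : ¬ IsBounded (a '' setOf p)) : Close A C := by
  have hinf : (setOf p).Infinite := by
    by_contra hfin
    rw [Set.not_infinite] at hfin
    exact hub (hfin.image a).isBounded
  refine ⟨R, hR, a ∘ Nat.nth p, b ∘ Nat.nth p,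
    fun n => hp _ (Nat.nth_mem_of_infinite hinf n), fun n => hb _, fun n => hd _, ?_⟩
  rw [Set.range_comp, Nat.range_nth_of_infinite hinf]
  exact hub

lemma close_union_left {A B C : Set X} (h : Close (A ∪ B) C) : Close A C ∨ Close B C := by
  obtain ⟨R, hR, a, b, ha, hb, hd, hub⟩ := h
  by_cases h1 : IsBounded (a '' {n | a n ∈ A})
  · right
    refine close_of_unbounded_part hR hb hd (p := fun n => a n ∉ A)
      (fun n hn => (ha n).resolve_left hn) ?_
    intro h2
    apply hub
    have hsub : Set.range a ⊆ a '' {n | a n ∈ A} ∪ a '' {n | a n ∉ A} := by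
      rintro x ⟨n, rfl⟩
      by_cases hn : a n ∈ A
      · exact Or.inl ⟨n, hn, rfl⟩
      · exact Or.inr ⟨n, hn, rfl⟩
    exact (h1.union h2).subset hsub
  · left
    exact close_of_unbounded_part hR hb hd (fun n hn => hn) h1

lemma close_transfer {A A' Q : Set X} {C : ℝ}
    (h : ∀ x ∈ A, ∃ y ∈ A', dist x y ≤ C) (hc : Close A Q) : Close A' Q := by
  obtain ⟨R, hR, a, b, ha, hb, hd, hub⟩ := hc
  choose f hf hfd using fun n => h (a n) (ha n)
  refine ⟨R + max C 0, add_nonneg hR (le_max_right _ _), f, b, hf, hb, fun n => ?_, fun h' => ?_⟩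
  · have h1 : dist (f n) (b n) ≤ dist (f n) (a n) + dist (a n) (b n) := dist_triangle _ _ _
    have h2 : dist (f n) (a n) ≤ max C 0 := by
      rw [dist_comm]; exact (hfd n).trans (le_max_left _ _)
    linarith [hd n]
  · exact hub (bounded_pair (fun n => (hfd n).trans (le_max_left C 0)) h')

lemma closeF_symm {A B : Set X} (h : CloseF A B) : CloseF B A := by
  rintro ⟨A', B', hA, hB, hcov, hnc⟩
  exact h ⟨B', A', hB, hA, by rw [Set.union_comm]; exact hcov,
    fun hc => hnc (close_symm hc)⟩

lemma closeF_mono {A A₂ B B₂ : Set X} (hA : A ⊆ A₂) (hB : B ⊆ B₂) (h : CloseF A B) :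
    CloseF A₂ B₂ := by
  rintro ⟨A', B', hA', hB', hcov, hnc⟩
  exact h ⟨A', B', hA.trans hA', hB.trans hB', hcov, hnc⟩

end Aux

/-- the relation `≍_f` is a large-scale proximity relation. -/
theorem closeF_isLSP {X : Type*} [MetricSpace X] :
    IsLSP (fun A B : Set X => CloseF A B) := by
  constructor
  · -- not_self_iff_bounded
    intro B
    constructor
    · intro h
      rw [CloseF, not_not] at h
      obtain ⟨A', B', hA, hB, _, hnc⟩ := h
      by_contra hub
      obtain ⟨a, ha, hua⟩ := exists_seq_of_unbounded hub
      exact hnc ⟨0, le_refl 0, a, a, fun n => hA (ha n), fun n => hB (ha n),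
        fun n => by simp, hua⟩
    · intro hb
      rw [CloseF, not_not]
      refine ⟨Set.univ, B, Set.subset_univ _, subset_rfl, Set.univ_union B, ?_⟩
      rintro ⟨R, _, a, b, _, hbB, hd, hub⟩
      exact hub (bounded_pair hd (hb.subset (Set.range_subset_iff.mpr hbB)))
  · -- symm
    exact fun A B h => closeF_symm h
  · -- entourage_invariant
    intro A A' E hE _ hA B hAB
    rintro ⟨P, Q, hPA', hQB, hcov, hnc⟩
    apply hAB
    refine ⟨P ∪ A, Q, Set.subset_union_right, hQB, ?_, ?_⟩
    · apply Set.eq_univ_of_univ_subset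
      calc Set.univ = P ∪ Q := hcov.symm
        _ ⊆ (P ∪ A) ∪ Q := Set.union_subset_union_left Q Set.subset_union_left
    · intro hc
      rcases close_union_left hc with h | h
      · exact hnc h
      · obtain ⟨C, hC⟩ := hE
        have htr : ∀ x ∈ A, ∃ y ∈ A', dist x y ≤ C := by
          intro x hx
          obtain ⟨y, hy, hxy⟩ := hA hx
          exact ⟨y, hy, hC _ hxy⟩
        exact hnc (close_mono hPA' subset_rfl (close_transfer htr h))
  · -- union_iff
    intro A B C
    constructor
    · intro h
      by_contra h'
      push_neg at h'
      obtain ⟨h1, h2⟩ := h'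
      rw [CloseF, not_not] at h1 h2
      obtain ⟨A₁, C₁, hA₁, hC₁, hcov₁, hnc₁⟩ := h1
      obtain ⟨A₂, C₂, hA₂, hC₂, hcov₂, hnc₂⟩ := h2
      apply h
      refine ⟨A₁ ∪ A₂, C₁ ∩ C₂, Set.union_subset_union hA₁ hA₂,
        Set.subset_inter hC₁ hC₂, ?_, ?_⟩
      · apply Set.eq_univ_of_univ_subset
        intro x _
        have e1 : x ∈ A₁ ∪ C₁ := hcov₁.symm ▸ Set.mem_univ x
        have e2 : x ∈ A₂ ∪ C₂ := hcov₂.symm ▸ Set.mem_univ x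
        simp only [Set.mem_union, Set.mem_inter_iff] at *
        tauto
      · intro hc
        rcases close_union_left hc with h | h
        · exact hnc₁ (close_mono subset_rfl Set.inter_subset_left h)
        · exact hnc₂ (close_mono subset_rfl Set.inter_subset_right h)
    · rintro (h | h)
      · exact closeF_mono Set.subset_union_left subset_rfl h
      · exact closeF_mono Set.subset_union_right subset_rfl h
  · -- separation
    intro A B h
    rw [CloseF, not_not] at h
    obtain ⟨A', B', hA, hB, hcov, hnc⟩ := h
    refine ⟨B', A', by rw [Set.union_comm]; exact hcov, ?_, ?_⟩
    · exact not_not.mpr ⟨B', A', subset_rfl, hA, by rw [Set.union_comm]; exact hcov,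
        fun hc => hnc (close_symm hc)⟩
    · exact not_not.mpr ⟨A', B', subset_rfl, hB, hcov, hnc⟩
end
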